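/- arXiv:1812.01794 — 4 statements merged into one kernel-verified Lean document; each statement's English description precedes it below -/
import Mathlib

section
/- Let n ≥ 1 and 2 ≤ ℓ ≤ n be integers and let c be a real number with c ≥ 4n/(ℓ−1). Then for all p ∈ (0,1), (1 − p^c)·p^n ≥ Pr[W_{ℓ,n} > p and X_{(1),n} < p]; equivalently, the conditional probability that the maximum of c i.i.d. uniform draws exceeds p, given X_{(1),n} < p, is at least Pr[W_{ℓ,n} > p | X_{(1),n} < p]. Moreover, when ℓ = 2 the same conclusion holds already whenever c ≥ n. -/
open MeasureTheory Set

/-- The uniform distribution on `[0,1]`. -/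
noncomputable def unif : Measure ℝ := volume.restrict (Set.Icc 0 1)

instance : IsProbabilityMeasure unif := by
  constructor
  simp [unif, Real.volume_Icc]

/-- The `k`-th largest entry (1-indexed) of a tuple `x : Fin n → ℝ`. -/
noncomputable def kthLargest {n : ℕ} (x : Fin n → ℝ) (k : ℕ) : ℝ :=
  if h : n - k < n then x (Tuple.sort x ⟨n - k, h⟩) else 0

/-- Given the `n` draws `x` and an independent uniform `u ∈ [0,1]`, this is the random
variable `W_{ℓ,n}` which, conditioned on `x`, is uniform on `[X_{(ℓ),n}, 1]`. -/
noncomputable def Wvar {n : ℕ} (ℓ : ℕ) (x : Fin n → ℝ) (u : ℝ) : ℝ :=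
  kthLargest x ℓ + u * (1 - kthLargest x ℓ)

/-- The sample space for `n` i.i.d. uniforms `X` together with the independent auxiliary
uniform defining `W_{ℓ,n}`. -/
noncomputable def P₂ (n : ℕ) : Measure ((Fin n → ℝ) × ℝ) :=
  (Measure.pi fun _ : Fin n => unif).prod unif

section Aux

open Finset Filter Topology

noncomputable def Pn (n : ℕ) : Measure (Fin n → ℝ) := Measure.pi fun _ : Fin n => unif

instance {n : ℕ} : IsProbabilityMeasure (Pn n) := by unfold Pn; infer_instance

variable {n ℓ : ℕ}

lemma beta_nat : ∀ (b a : ℕ), ∫ x in (0:ℝ)..1, x ^ a * (1 - x) ^ b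
    = (a.factorial * b.factorial : ℝ) / (a + b + 1).factorial := by
  intro b
  induction b with
  | zero =>
    intro a
    simp only [pow_zero, mul_one, integral_pow, one_pow]
    have : (a + 0 + 1).factorial = (a+1) * a.factorial := by
      simp [Nat.factorial_succ]
    rw [this]
    rw [zero_pow (by omega)]
    push_cast
    rw [div_eq_div_iff (by positivity) (by positivity)]
    have : (a.factorial : ℝ) ≠ 0 := by positivity
    field_simp
    ring
  | succ b ih =>
    intro a
    have hu : ∀ x ∈ uIcc (0:ℝ) 1, HasDerivAt (fun x : ℝ => (1 - x) ^ (b + 1))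
        (-(b+1) * (1 - x) ^ b) x := by
      intro x _
      have h1 : HasDerivAt (fun x : ℝ => 1 - x) (-1) x := by
        simpa using (hasDerivAt_id x).const_sub 1
      have := (h1.pow (b+1))
      convert this using 1
      · rfl
      · rfl
      · rfl
      push_cast
      ring
    have hv : ∀ x ∈ uIcc (0:ℝ) 1, HasDerivAt (fun x : ℝ => x ^ (a + 1) / (a + 1))
        (x ^ a) x := by
      intro x _
      have := (hasDerivAt_pow (a+1) x).div_const ((a:ℝ)+1)
      convert this using 1
      · rfl
      · rfl
      push_cast
      field_simp
    have hint1 : IntervalIntegrable (fun x : ℝ => -(b+1) * (1 - x) ^ b) volume 0 1 := by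
      apply Continuous.intervalIntegrable; continuity
    have hint2 : IntervalIntegrable (fun x : ℝ => x ^ a) volume 0 1 := by
      apply Continuous.intervalIntegrable; continuity
    have key := intervalIntegral.integral_mul_deriv_eq_deriv_mul hu hv hint1 hint2
    have eq1 : ∫ x in (0:ℝ)..1, x ^ a * (1 - x) ^ (b+1)
        = ∫ x in (0:ℝ)..1, (1 - x) ^ (b+1) * x ^ a := by
      congr 1; ext x; ring
    rw [eq1, key]
    simp only [one_pow, sub_self, zero_pow, Nat.succ_ne_zero, ne_eq, not_false_iff]
    have eq2 : ∫ x in (0:ℝ)..1, -(b+1) * (1 - x) ^ b * (x ^ (a+1) / (a+1))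
        = (-(b+1) / (a+1)) * ∫ x in (0:ℝ)..1, x ^ (a+1) * (1 - x) ^ b := by
      rw [← intervalIntegral.integral_const_mul]
      congr 1; ext x; ring
    rw [eq2, ih (a+1)]
    have h1 : ((a+1).factorial : ℝ) = (a+1) * a.factorial := by
      push_cast [Nat.factorial_succ]; ring
    have h2 : ((b+1).factorial : ℝ) = (b+1) * b.factorial := by
      push_cast [Nat.factorial_succ]; ring
    have h3 : (a + 1 + b + 1) = (a + (b+1) + 1) := by ring
    rw [h3]
    have hfa : ((a + (b+1) + 1).factorial : ℝ) ≠ 0 := by positivity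
    field_simp [h1, h2]
    simp only [add_comm 1 a, add_comm 1 b, h1, h2]
    ring


lemma kthLargest_def (x : Fin n → ℝ) {k : ℕ} (hk : 1 ≤ k) (hkn : k ≤ n) :
    kthLargest x k = x (Tuple.sort x ⟨n - k, by omega⟩) := by
  rw [kthLargest, dif_pos]

lemma kthLargest_eq_apply (x : Fin n → ℝ) {k : ℕ} (hk : 1 ≤ k) (hkn : k ≤ n) :
    ∃ j, kthLargest x k = x j :=
  ⟨_, kthLargest_def x hk hkn⟩

lemma card_filter_sort (x : Fin n → ℝ) (P : ℝ → Prop) [DecidablePred P] :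
    (univ.filter fun j => P ((x ∘ Tuple.sort x) j)).card
      = (univ.filter fun i => P (x i)).card := by
  apply Finset.card_bij (fun j _ => Tuple.sort x j)
  · intro j hj
    simp only [Finset.mem_filter, Finset.mem_univ, true_and, Function.comp_apply] at hj ⊢
    exact hj
  · intro j₁ _ j₂ _ h
    exact (Tuple.sort x).injective h
  · intro i hi
    refine ⟨(Tuple.sort x).symm i, ?_, by simp⟩
    simp only [Finset.mem_filter, Finset.mem_univ, true_and, Function.comp_apply,
      Equiv.apply_symm_apply] at hi ⊢
    exact hi

lemma lt_kthLargest_iff (x : Fin n → ℝ) {k : ℕ} (hk : 1 ≤ k) (hkn : k ≤ n) (t : ℝ) :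
    t < kthLargest x k ↔ k ≤ (univ.filter fun i => t < x i).card := by
  rw [kthLargest_def x hk hkn]
  rw [← card_filter_sort x (fun v => t < v)]
  set y := x ∘ Tuple.sort x with hy
  have hmono : Monotone y := Tuple.monotone_sort x
  constructor
  · intro h
    have hsub : Finset.Ici (⟨n - k, by omega⟩ : Fin n) ⊆ univ.filter fun j => t < y j := by
      intro j hj
      simp only [Finset.mem_Ici] at hj
      simp only [Finset.mem_filter, Finset.mem_univ, true_and]
      exact lt_of_lt_of_le h (hmono hj)
    have hcard : (Finset.Ici (⟨n - k, by omega⟩ : Fin n)).card = k := by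
      rw [Fin.card_Ici]; simp; omega
    calc k = (Finset.Ici (⟨n - k, by omega⟩ : Fin n)).card := hcard.symm
    _ ≤ _ := Finset.card_le_card hsub
  · intro h
    by_contra hcon
    push_neg at hcon
    have hsub : (univ.filter fun j => t < y j) ⊆ Finset.Ioi (⟨n - k, by omega⟩ : Fin n) := by
      intro j hj
      simp only [Finset.mem_filter, Finset.mem_univ, true_and] at hj
      simp only [Finset.mem_Ioi]
      by_contra hj2
      push_neg at hj2
      have : y j ≤ y ⟨n - k, by omega⟩ := hmono hj2
      exact absurd hj (not_lt.mpr (le_trans this hcon))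
    have hle := Finset.card_le_card hsub
    rw [Fin.card_Ioi] at hle
    simp only at hle
    omega

lemma kthLargest_le_iff (x : Fin n → ℝ) {k : ℕ} (hk : 1 ≤ k) (hkn : k ≤ n) (t : ℝ) :
    kthLargest x k ≤ t ↔ (univ.filter fun i => t < x i).card < k := by
  rw [← not_lt, lt_kthLargest_iff x hk hkn, not_le]

lemma le_kthLargest_of (x : Fin n → ℝ) {k k' : ℕ} (hk : 1 ≤ k) (hkk' : k ≤ k') (hkn : k' ≤ n) :
    kthLargest x k' ≤ kthLargest x k := by
  rw [kthLargest_def x hk (by omega), kthLargest_def x (by omega) hkn]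
  exact Tuple.monotone_sort x (by simp [Fin.le_def]; omega)

lemma kthLargest_one_lt_iff (x : Fin n → ℝ) (hn : 1 ≤ n) (p : ℝ) :
    kthLargest x 1 < p ↔ ∀ i, x i < p := by
  constructor
  · intro h i
    -- x i ≤ kthLargest x 1
    refine lt_of_le_of_lt ?_ h
    by_contra hcon
    push_neg at hcon
    have := (lt_kthLargest_iff x le_rfl hn (kthLargest x 1)).mpr ?_
    · exact lt_irrefl _ this
    · rw [Finset.one_le_card]
      exact ⟨i, by simp [hcon]⟩
  · intro h
    obtain ⟨j, hj⟩ := kthLargest_eq_apply x le_rfl hn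
    rw [hj]; exact h j


lemma unif_apply (s : Set ℝ) (hs : MeasurableSet s) :
    unif s = volume (s ∩ Icc 0 1) := Measure.restrict_apply hs

lemma unif_Iio {p : ℝ} (h0 : 0 ≤ p) (h1 : p ≤ 1) : unif (Iio p) = ENNReal.ofReal p := by
  rw [unif_apply _ measurableSet_Iio]
  have : Iio p ∩ Icc 0 1 = Ico 0 p := by
    ext x; simp only [mem_inter_iff, Set.mem_Iio, Set.mem_Icc, Set.mem_Ico]
    constructor
    · rintro ⟨h, h2, _⟩; exact ⟨h2, h⟩
    · rintro ⟨h2, h⟩; exact ⟨h, h2, le_trans (le_of_lt h) h1⟩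
  rw [this, Real.volume_Ico, sub_zero]

lemma unif_Ioi {r : ℝ} (h0 : 0 ≤ r) (h1 : r ≤ 1) : unif (Ioi r) = ENNReal.ofReal (1 - r) := by
  rw [unif_apply _ measurableSet_Ioi]
  have : Ioi r ∩ Icc 0 1 = Ioc r 1 := by
    ext x; simp only [mem_inter_iff, Set.mem_Ioi, Set.mem_Icc, Set.mem_Ioc]
    constructor
    · rintro ⟨h, _, h3⟩; exact ⟨h, h3⟩
    · rintro ⟨h, h3⟩; exact ⟨h, le_trans h0 (le_of_lt h), h3⟩
  rw [this, Real.volume_Ioc]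

lemma unif_Ioo {a b : ℝ} (h0 : 0 ≤ a) (h1 : b ≤ 1) : unif (Ioo a b) = ENNReal.ofReal (b - a) := by
  rw [unif_apply _ measurableSet_Ioo]
  have : Ioo a b ∩ Icc 0 1 = Ioo a b := by
    apply inter_eq_self_of_subset_left
    intro x hx
    exact ⟨le_trans h0 (le_of_lt hx.1), le_trans (le_of_lt hx.2) h1⟩
  rw [this, Real.volume_Ioo]

lemma unif_Icc_zero {s : ℝ} (h0 : 0 ≤ s) (h1 : s ≤ 1) : unif (Icc 0 s) = ENNReal.ofReal s := by
  rw [unif_apply _ measurableSet_Icc]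
  have : Icc 0 s ∩ Icc 0 1 = Icc 0 s := by
    apply inter_eq_self_of_subset_left
    intro x hx
    exact ⟨hx.1, le_trans hx.2 h1⟩
  rw [this, Real.volume_Icc, sub_zero]



lemma Pn_cube_ae : ∀ᵐ x ∂(Pn n), ∀ i, x i ∈ Icc (0:ℝ) 1 := by
  rw [MeasureTheory.ae_all_iff]
  intro i
  have : {x : Fin n → ℝ | ¬ x i ∈ Icc (0:ℝ) 1} = (fun x : Fin n → ℝ => x i) ⁻¹' (Icc (0:ℝ) 1)ᶜ := rfl
  rw [Filter.eventually_iff, mem_ae_iff]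
  show Pn n {x : Fin n → ℝ | x i ∈ Icc (0:ℝ) 1}ᶜ = 0
  have hc : {x : Fin n → ℝ | x i ∈ Icc (0:ℝ) 1}ᶜ = (fun x : Fin n → ℝ => x i) ⁻¹' ((Icc (0:ℝ) 1)ᶜ) := by
    ext x; simp
  rw [hc]
  apply MeasureTheory.Measure.pi_eval_preimage_null
  rw [unif_apply _ measurableSet_Icc.compl]
  simp

lemma Pn_lt_p {p : ℝ} (h0 : 0 ≤ p) (h1 : p ≤ 1) :
    Pn n {x : Fin n → ℝ | ∀ i, x i < p} = ENNReal.ofReal p ^ n := by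
  have : {x : Fin n → ℝ | ∀ i, x i < p} = Set.pi univ (fun _ => Iio p) := by
    ext x; simp [Set.mem_pi]
  rw [this, Pn, MeasureTheory.Measure.pi_pi]
  simp [unif_Iio h0 h1]


lemma measurable_kthLargest {k : ℕ} (hk : 1 ≤ k) (hkn : k ≤ n) :
    Measurable (fun x : Fin n → ℝ => kthLargest x k) := by
  apply measurable_of_Ioi
  intro t
  have hset : (fun x : Fin n → ℝ => kthLargest x k) ⁻¹' Ioi t
      = ⋃ (S : Finset (Fin n)) (_ : S.card = k), ⋂ i ∈ S, {x : Fin n → ℝ | t < x i} := by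
    ext x
    simp only [Set.mem_preimage, Set.mem_Ioi, Set.mem_iUnion, Set.mem_iInter, Set.mem_setOf_eq]
    rw [lt_kthLargest_iff x hk hkn]
    constructor
    · intro h
      obtain ⟨S, hS, hScard⟩ := Finset.exists_subset_card_eq h
      refine ⟨S, hScard, fun i hi => ?_⟩
      have := hS hi
      simp only [Finset.mem_filter, Finset.mem_univ, true_and] at this
      exact this
    · rintro ⟨S, hScard, hS⟩
      rw [← hScard]
      apply Finset.card_le_card
      intro i hi
      simp only [Finset.mem_filter, Finset.mem_univ, true_and]
      exact hS i hi
  rw [hset]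
  apply MeasurableSet.iUnion
  intro S
  apply MeasurableSet.iUnion
  intro _
  apply MeasurableSet.biInter (Set.to_countable _)
  intro i _
  exact measurableSet_lt measurable_const (measurable_pi_apply i)


lemma telescope_sum {ℓ : ℕ} (h2 : 2 ≤ ℓ) :
    ∀ n, ℓ ≤ n → ∑ j ∈ Icc ℓ n, (1/((j:ℝ)-1) - 1/(j:ℝ)) = 1/((ℓ:ℝ)-1) - 1/(n:ℝ) := by
  intro n
  induction n with
  | zero => intro h; omega
  | succ m ih =>
    intro h
    rcases Nat.lt_or_ge m ℓ with hm | hm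
    · have : ℓ = m + 1 := by omega
      subst this
      simp [Finset.Icc_self]
    · rw [Finset.sum_Icc_succ_top (by omega : ℓ ≤ m + 1)]
      rw [ih hm]
      have hm1 : (1:ℝ) ≤ m := by exact_mod_cast Nat.one_le_iff_ne_zero.mpr (by omega)
      push_cast
      ring

lemma choose_term {n j : ℕ} (h2 : 2 ≤ j) (hjn : j ≤ n) :
    (n.choose j : ℝ) * ((n-j).factorial * (j-2).factorial / (n-1).factorial)
      = (n:ℝ) * (1/((j:ℝ)-1) - 1/(j:ℝ)) := by
  obtain ⟨j', rfl⟩ : ∃ j', j = j' + 2 := ⟨j - 2, by omega⟩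
  obtain ⟨n', rfl⟩ : ∃ n', n = n' + 1 := ⟨n - 1, by omega⟩
  have e1 : j' + 2 - 2 = j' := by omega
  have e2 : n' + 1 - 1 = n' := by omega
  rw [e1, e2]
  have key : (n'+1).choose (j'+2) * (j'+2).factorial * (n'+1-(j'+2)).factorial
      = (n'+1).factorial := Nat.choose_mul_factorial_mul_factorial hjn
  have hj : (j'+2).factorial = (j'+2) * (j'+1) * j'.factorial := by
    rw [Nat.factorial_succ, Nat.factorial_succ]; ring
  have hn : (n'+1).factorial = (n'+1) * n'.factorial := Nat.factorial_succ n'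
  rw [hj, hn] at key
  have keyR : ((n'+1).choose (j'+2) : ℝ) * ((j'+2) * (j'+1) * j'.factorial)
      * ((n'+1-(j'+2)).factorial : ℝ) = (n'+1) * (n'.factorial : ℝ) := by
    exact_mod_cast key
  have hD : (0:ℝ) < (n'.factorial : ℝ) := by positivity
  have hj1 : (0:ℝ) < (j':ℝ) + 1 := by positivity
  have hj2 : (0:ℝ) < (j':ℝ) + 2 := by positivity
  have hcast1 : ((j' + 2 : ℕ):ℝ) - 1 = (j':ℝ) + 1 := by push_cast; ring
  rw [hcast1]
  have hrhs : ((n' + 1 : ℕ):ℝ) * (1/((j':ℝ)+1) - 1/((j' + 2 : ℕ):ℝ))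
      = ((n':ℝ)+1) / (((j':ℝ)+1) * ((j':ℝ)+2)) := by
    push_cast
    field_simp
    ring
  rw [hrhs]
  field_simp
  linear_combination ((↑j' + 1) * (↑j' + 2) : ℝ)⁻¹ * 0 + keyR


lemma tail_integral {p : ℝ} (hp0 : 0 < p) {n j : ℕ} (hj2 : 2 ≤ j) (hjn : j ≤ n) :
    IntegrableOn (fun t : ℝ => (p/t)^j * (p - p/t)^(n-j)) (Ioi 1) volume ∧
    ∫ t in Ioi (1:ℝ), (p/t)^j * (p - p/t)^(n-j)
      = p ^ n * (((n-j).factorial * (j-2).factorial : ℝ) / (n-1).factorial) := by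
  obtain ⟨j', rfl⟩ : ∃ j', j = j' + 2 := ⟨j - 2, by omega⟩
  set f₀ : ℝ → ℝ := fun w => w ^ (n - (j'+2)) * (1 - w) ^ j' with hf₀
  have hcont₀ : Continuous f₀ := by fun_prop
  set F : ℝ → ℝ := fun v => ∫ w in (0:ℝ)..v, f₀ w with hF
  have hFderiv : ∀ v : ℝ, HasDerivAt F (f₀ v) v := by
    intro v
    exact intervalIntegral.integral_hasDerivAt_right
      (hcont₀.intervalIntegrable _ _)
      (hcont₀.stronglyMeasurable.stronglyMeasurableAtFilter)
      hcont₀.continuousAt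
  set G : ℝ → ℝ := fun t => p ^ n * F (1 - 1/t) with hG
  have hGderiv : ∀ t ∈ Ici (1:ℝ), HasDerivAt G ((p/t)^(j'+2) * (p - p/t)^(n-(j'+2))) t := by
    intro t ht
    have ht0 : t ≠ 0 := by simp only [Set.mem_Ici] at ht; intro h; rw [h] at ht; linarith
    have h1 : HasDerivAt (fun t : ℝ => 1 - 1/t) (1/t^2) t := by
      have := (hasDerivAt_inv ht0).const_sub 1
      simpa [one_div] using this
    have h2 : HasDerivAt (fun t : ℝ => F (1 - 1/t)) (f₀ (1 - 1/t) * (1/t^2)) t :=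
      (hFderiv (1 - 1/t)).comp (h₂ := F) t h1
    have h3 := h2.const_mul (p ^ n)
    convert h3 using 1
    · rfl
    · rfl
    simp only [Set.mem_Ici] at ht
    have ht0' : (0:ℝ) < t := by linarith
    rw [hf₀]
    simp only []
    have e1 : (1 : ℝ) - (1 - 1/t) = 1/t := by ring
    rw [e1]
    have e2 : (p/t)^(j'+2) = p^(j'+2) * (1/t)^j' * (1/t^2) := by
      field_simp
      have htt : t^2 * t⁻¹^2 = 1 := by rw [← mul_pow, mul_inv_cancel₀ ht0, one_pow]
      linear_combination (p^2 * p^j' * t⁻¹^j') * htt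
    have e3 : (p - p/t)^(n-(j'+2)) = p^(n-(j'+2)) * (1-1/t)^(n-(j'+2)) := by
      rw [← mul_pow]
      congr 1
      field_simp
    rw [e2, e3]
    have e4 : p ^ n = p^(j'+2) * p^(n-(j'+2)) := by
      rw [← pow_add]
      congr 1
      omega
    rw [e4]
    ring
  have hnonneg : ∀ t ∈ Ioi (1:ℝ), 0 ≤ (p/t)^(j'+2) * (p - p/t)^(n-(j'+2)) := by
    intro t ht
    simp only [Set.mem_Ioi] at ht
    have h1 : 0 < t := by linarith
    have h2 : 0 ≤ p/t := le_of_lt (div_pos hp0 h1)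
    have h3 : 0 ≤ p - p/t := by
      rw [sub_nonneg]
      rw [div_le_iff₀ h1]
      nlinarith
    positivity
  have htend : Tendsto G atTop (𝓝 (p ^ n * F 1)) := by
    apply Tendsto.const_mul
    apply (hFderiv 1).continuousAt.tendsto.comp
    have h0 : Tendsto (fun t : ℝ => 1/t) atTop (𝓝 0) := by
      simpa [one_div] using (tendsto_inv_atTop_zero : Tendsto (fun x : ℝ => x⁻¹) atTop (𝓝 0))
    have : Tendsto (fun t : ℝ => 1 - 1/t) atTop (𝓝 (1 - 0)) := h0.const_sub 1
    simpa using this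
  have hint := integrableOn_Ioi_deriv_of_nonneg' hGderiv hnonneg htend
  refine ⟨hint, ?_⟩
  have hval := integral_Ioi_of_hasDerivAt_of_nonneg' hGderiv hnonneg htend
  rw [hval]
  have hG1 : G 1 = 0 := by
    simp [hG, hF]
  rw [hG1, sub_zero]
  congr 1
  have hFv : F 1 = ∫ w in (0:ℝ)..1, w ^ (n - (j'+2)) * (1 - w) ^ j' := rfl
  rw [hFv, beta_nat j' (n - (j'+2))]
  have e1 : j' + 2 - 2 = j' := by omega
  have e2 : n - (j'+2) + j' + 1 = n - 1 := by omega
  rw [e1, e2]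


lemma geom_split {x : ℝ} (hx : x ≠ 1) (m : ℕ) :
    1/(1 - x) = (∑ k ∈ range m, x^k) + x^m/(1 - x) := by
  have h : (1:ℝ) - x ≠ 0 := by intro h; apply hx; linarith [sub_eq_zero.mp h]
  field_simp
  have := geom_sum_mul (x := x) m
  -- (∑ i in range m, x^i) * (x-1) = x^m - 1
  nlinarith [this]

lemma star_ineq {p y : ℝ} (hp0 : 0 < p) (hp1 : p < 1) (hy0 : 0 ≤ y) (hy1 : y < 1)
    (m : ℕ) :
    1/(1 - p*y) + m * p^m ≤ (1 - p^m)/(1 - p) + p^m/(1 - y) := by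
  have hpy1 : p * y < 1 := by nlinarith
  have hpy0 : 0 ≤ p * y := by positivity
  have h1 : (1:ℝ) - p*y > 0 := by linarith
  have h2 : (1:ℝ) - y > 0 := by linarith
  have h3 : (1:ℝ) - p > 0 := by linarith
  have hgeomp : (1 - p^m)/(1 - p) = ∑ k ∈ range m, p^k := by
    rw [geom_sum_eq (by linarith : p ≠ 1)]
    rw [div_eq_div_iff (by linarith) (by intro h; apply (by linarith : p ≠ 1); linarith [sub_eq_zero.mp h])]
    ring
  have hsplit : p^m/(1-y) = p^m * (1/(1-y)) := by ring
  rw [hgeomp, hsplit, geom_split (x := p*y) (by linarith) m, geom_split (x := y) (by linarith) m]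
  have key1 : ∑ k ∈ range m, (p*y)^k + m * p^m ≤ ∑ k ∈ range m, p^k + p^m * ∑ k ∈ range m, y^k := by
    have : (m : ℝ) * p^m = ∑ _k ∈ range m, p^m := by
      rw [Finset.sum_const, card_range, nsmul_eq_mul]
    rw [this, Finset.mul_sum, ← Finset.sum_add_distrib, ← Finset.sum_add_distrib]
    apply Finset.sum_le_sum
    intro k hk
    simp only [Finset.mem_range] at hk
    have hpk : p^m ≤ p^k := pow_le_pow_of_le_one (le_of_lt hp0) (le_of_lt hp1) (by omega)
    have hyk : y^k ≤ 1 := pow_le_one₀ hy0 (le_of_lt hy1)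
    have : (p^k - p^m) * y^k ≤ (p^k - p^m) * 1 := by
      apply mul_le_mul_of_nonneg_left hyk (by linarith)
    calc (p*y)^k + p^m = p^k * y^k + p^m := by rw [mul_pow]
    _ ≤ p^k + p^m * y^k := by nlinarith
  have key2 : (p*y)^m/(1 - p*y) ≤ p^m * (y^m/(1 - y)) := by
    rw [mul_pow]
    have hy_le : 1 - y ≤ 1 - p*y := by nlinarith
    have hnn : 0 ≤ p^m * y^m := by positivity
    calc p^m * y^m / (1 - p*y) ≤ p^m * y^m / (1 - y) :=
          div_le_div_of_nonneg_left hnn h2 hy_le |>.trans_eq rfl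
      _ = p^m * (y^m/(1-y)) := by ring
  calc ∑ k ∈ range m, (p*y)^k + (p*y)^m/(1-p*y) + m * p^m
      = (∑ k ∈ range m, (p*y)^k + m * p^m) + (p*y)^m/(1-p*y) := by ring
    _ ≤ (∑ k ∈ range m, p^k + p^m * ∑ k ∈ range m, y^k) + p^m * (y^m/(1-y)) := by
        exact add_le_add key1 key2
    _ = ∑ k ∈ range m, p^k + p^m * (∑ k ∈ range m, y^k + y^m/(1-y)) := by ring


lemma measurableSet_A' {p : ℝ} : MeasurableSet {x : Fin n → ℝ | ∀ i, x i < p} := by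
  have : {x : Fin n → ℝ | ∀ i, x i < p} = ⋂ i, {x : Fin n → ℝ | x i < p} := by
    ext x; simp
  rw [this]
  exact MeasurableSet.iInter fun i => measurableSet_lt (measurable_pi_apply i) measurable_const

lemma key_bound (hn : 1 ≤ n) (hl2 : 2 ≤ ℓ) (hln : ℓ ≤ n) {p : ℝ} (hp : p ∈ Ioo (0:ℝ) 1) :
    ∫⁻ x in {x : Fin n → ℝ | ∀ i, x i < p},
        ENNReal.ofReal (p/(p - kthLargest x ℓ)) ∂(Pn n)
      ≤ ENNReal.ofReal (((n:ℝ)/((ℓ:ℝ)-1)) * p^n) := by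
  obtain ⟨hp0, hp1⟩ := hp
  set A' : Set (Fin n → ℝ) := {x : Fin n → ℝ | ∀ i, x i < p} with hA'
  set f : (Fin n → ℝ) → ℝ := fun x => p / (p - kthLargest x ℓ) with hf
  have hmf : Measurable f := by
    apply Measurable.div measurable_const
    exact Measurable.sub measurable_const (measurable_kthLargest (by omega) hln)
  have hApos : ∀ x ∈ A', 0 < p - kthLargest x ℓ := by
    intro x hx
    obtain ⟨j, hj⟩ := kthLargest_eq_apply x (by omega : 1 ≤ ℓ) hln
    rw [hj]
    have := hx j
    linarith
  have hnn : 0 ≤ᵐ[(Pn n).restrict A'] f := by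
    rw [EventuallyLE, ae_restrict_iff' measurableSet_A']
    filter_upwards with x hx
    exact le_of_lt (div_pos hp0 (hApos x hx))
  rw [MeasureTheory.lintegral_eq_lintegral_meas_lt _ hnn hmf.aemeasurable]
  -- bound the measure of superlevel sets
  have hmeas_le : ∀ t : ℝ, ((Pn n).restrict A') {x | t < f x} ≤ ENNReal.ofReal p ^ n := by
    intro t
    rw [Measure.restrict_apply' measurableSet_A']
    refine le_trans (measure_mono (inter_subset_right)) ?_
    rw [← Pn_lt_p (le_of_lt hp0) (le_of_lt hp1)]
  -- for t > 1
  have hmeas_tail : ∀ t : ℝ, 1 < t →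
      ((Pn n).restrict A') {x | t < f x}
        ≤ ∑ S ∈ (univ : Finset (Finset (Fin n))).filter (fun S => ℓ ≤ S.card),
            ENNReal.ofReal ((p/t)^S.card * (p - p/t)^(n - S.card)) := by
    intro t ht
    rw [Measure.restrict_apply' measurableSet_A']
    set s : ℝ := p - p/t with hs
    have hts : 0 < t := by linarith
    have hs0 : 0 ≤ s := by
      rw [hs, sub_nonneg, div_le_iff₀ hts]
      nlinarith
    have hsp : s < p := by
      rw [hs]
      have : 0 < p / t := div_pos hp0 hts
      linarith
    have hsubset : {x | t < f x} ∩ A' ⊆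
        (⋃ S ∈ (univ : Finset (Finset (Fin n))).filter (fun S => ℓ ≤ S.card),
          Set.pi Set.univ (fun i => if i ∈ S then Ioo s p else Icc 0 s))
        ∪ {x : Fin n → ℝ | ∀ i, x i ∈ Icc (0:ℝ) 1}ᶜ := by
      intro x ⟨hxf, hxA⟩
      by_cases hcube : ∀ i, x i ∈ Icc (0:ℝ) 1
      swap
      · right; exact hcube
      left
      have hd := hApos x hxA
      have hxf' : t < p / (p - kthLargest x ℓ) := hxf
      have hklt : s < kthLargest x ℓ := by
        rw [hs]
        have h1 : t * (p - kthLargest x ℓ) < p := by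
          rw [← lt_div_iff₀ hd]; exact hxf'
        have h2 : p - kthLargest x ℓ < p / t := by
          rw [lt_div_iff₀ hts]; nlinarith
        linarith
      have hcard := (lt_kthLargest_iff x (by omega : 1 ≤ ℓ) hln s).mp hklt
      set S : Finset (Fin n) := univ.filter (fun i => s < x i) with hS
      simp only [Set.mem_iUnion]
      refine ⟨S, ?_, ?_⟩
      · simp only [Finset.mem_filter, Finset.mem_univ, true_and]
        exact hcard
      · rw [Set.mem_pi]
        intro i _
        by_cases hiS : i ∈ S
        · rw [if_pos hiS]
          simp only [hS, Finset.mem_filter, Finset.mem_univ, true_and] at hiS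
          exact ⟨hiS, hxA i⟩
        · rw [if_neg hiS]
          simp only [hS, Finset.mem_filter, Finset.mem_univ, true_and, not_lt] at hiS
          exact ⟨(hcube i).1, hiS⟩
    calc Pn n ({x | t < f x} ∩ A')
        ≤ Pn n ((⋃ S ∈ (univ : Finset (Finset (Fin n))).filter (fun S => ℓ ≤ S.card),
            Set.pi Set.univ (fun i => if i ∈ S then Ioo s p else Icc 0 s))
          ∪ {x : Fin n → ℝ | ∀ i, x i ∈ Icc (0:ℝ) 1}ᶜ) := measure_mono hsubset
      _ ≤ Pn n (⋃ S ∈ (univ : Finset (Finset (Fin n))).filter (fun S => ℓ ≤ S.card),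
            Set.pi Set.univ (fun i => if i ∈ S then Ioo s p else Icc 0 s))
          + Pn n ({x : Fin n → ℝ | ∀ i, x i ∈ Icc (0:ℝ) 1}ᶜ) := measure_union_le _ _
      _ = Pn n (⋃ S ∈ (univ : Finset (Finset (Fin n))).filter (fun S => ℓ ≤ S.card),
            Set.pi Set.univ (fun i => if i ∈ S then Ioo s p else Icc 0 s)) := by
          have hnull : Pn n ({x : Fin n → ℝ | ∀ i, x i ∈ Icc (0:ℝ) 1}ᶜ) = 0 := by
            have h := MeasureTheory.ae_iff.mp (Pn_cube_ae (n := n))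
            convert h using 2
            rfl
          rw [hnull, add_zero]
      _ ≤ ∑ S ∈ (univ : Finset (Finset (Fin n))).filter (fun S => ℓ ≤ S.card),
            Pn n (Set.pi Set.univ (fun i => if i ∈ S then Ioo s p else Icc 0 s)) :=
          measure_biUnion_finset_le _ _
      _ ≤ ∑ S ∈ (univ : Finset (Finset (Fin n))).filter (fun S => ℓ ≤ S.card),
            ENNReal.ofReal ((p/t)^S.card * (p - p/t)^(n - S.card)) := by
          apply Finset.sum_le_sum
          intro S _
          rw [Pn, MeasureTheory.Measure.pi_pi]
          have : ∀ i : Fin n, unif (if i ∈ S then Ioo s p else Icc 0 s)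
              = if i ∈ S then ENNReal.ofReal (p - s) else ENNReal.ofReal s := by
            intro i
            by_cases hiS : i ∈ S
            · rw [if_pos hiS, if_pos hiS, unif_Ioo hs0 (le_of_lt hp1)]
            · rw [if_neg hiS, if_neg hiS, unif_Icc_zero hs0 (by linarith)]
          rw [Finset.prod_congr rfl (fun i _ => this i)]
          rw [Finset.prod_ite, Finset.prod_const, Finset.prod_const]
          have hc1 : (univ.filter (fun i => i ∈ S)).card = S.card := by
            congr 1
            ext i
            simp
          have hc2 : (univ.filter (fun i => ¬ i ∈ S)).card = n - S.card := by
            rw [Finset.filter_not, Finset.filter_mem_eq_inter]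
            simp only [Finset.univ_inter]
            rw [Finset.card_sdiff_of_subset (Finset.subset_univ S), Finset.card_univ, Fintype.card_fin]
          rw [hc1, hc2]
          have hps : p - s = p / t := by rw [hs]; ring
          rw [hps]
          rw [← ENNReal.ofReal_pow (le_of_lt (div_pos hp0 hts)),
            ← ENNReal.ofReal_pow hs0, ← ENNReal.ofReal_mul (by positivity)]
  -- now assemble the t-integral
  have hsplit : (Ioi (0:ℝ)) = Set.Ioc 0 1 ∪ Set.Ioi 1 := (Set.Ioc_union_Ioi_eq_Ioi (by norm_num : (0:ℝ) ≤ 1)).symm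
  rw [hsplit, lintegral_union measurableSet_Ioi (Set.Ioc_disjoint_Ioi le_rfl)]
  set 𝒮 : Finset (Finset (Fin n)) := (univ : Finset (Finset (Fin n))).filter (fun S => ℓ ≤ S.card)
    with h𝒮
  set h : ℕ → ℝ := fun j => p^n * (((n-j).factorial * (j-2).factorial : ℝ) / (n-1).factorial)
    with hh
  have hpart1 : ∫⁻ t in Set.Ioc (0:ℝ) 1, ((Pn n).restrict A') {x | t < f x}
      ≤ ENNReal.ofReal (p^n) := by
    calc ∫⁻ t in Set.Ioc (0:ℝ) 1, ((Pn n).restrict A') {x | t < f x}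
        ≤ ∫⁻ _t in Set.Ioc (0:ℝ) 1, ENNReal.ofReal p ^ n := lintegral_mono fun t => hmeas_le t
      _ = ENNReal.ofReal p ^ n * volume (Set.Ioc (0:ℝ) 1) := by
          rw [MeasureTheory.lintegral_const, Measure.restrict_apply_univ]
      _ = ENNReal.ofReal (p^n) := by
          rw [Real.volume_Ioc, ENNReal.ofReal_pow (le_of_lt hp0)]
          norm_num
  have hgmeas : ∀ S : Finset (Fin n), Measurable (fun t : ℝ =>
      ENNReal.ofReal ((p/t)^S.card * (p - p/t)^(n - S.card))) := by
    intro S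
    apply Measurable.ennreal_ofReal
    exact ((measurable_const.div measurable_id).pow_const _).mul
      ((measurable_const.sub (measurable_const.div measurable_id)).pow_const _)
  have hpart2 : ∫⁻ t in Ioi (1:ℝ), ((Pn n).restrict A') {x | t < f x}
      ≤ ∑ S ∈ 𝒮, ENNReal.ofReal (h S.card) := by
    calc ∫⁻ t in Ioi (1:ℝ), ((Pn n).restrict A') {x | t < f x}
        ≤ ∫⁻ t in Ioi (1:ℝ), ∑ S ∈ 𝒮,
            ENNReal.ofReal ((p/t)^S.card * (p - p/t)^(n - S.card)) := by
          apply setLIntegral_mono' measurableSet_Ioi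
          intro t ht
          exact hmeas_tail t ht
      _ = ∑ S ∈ 𝒮, ∫⁻ t in Ioi (1:ℝ),
            ENNReal.ofReal ((p/t)^S.card * (p - p/t)^(n - S.card)) :=
          lintegral_finset_sum _ (fun S _ => hgmeas S)
      _ ≤ ∑ S ∈ 𝒮, ENNReal.ofReal (h S.card) := by
          apply Finset.sum_le_sum
          intro S hS
          have hcard2 : 2 ≤ S.card := by
            simp only [h𝒮, Finset.mem_filter] at hS
            omega
          have hcardn : S.card ≤ n := by
            have := Finset.card_le_univ S
            simpa using this
          obtain ⟨hint, hval⟩ := tail_integral hp0 hcard2 hcardn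
          have hnnae : 0 ≤ᵐ[volume.restrict (Ioi (1:ℝ))]
              (fun t : ℝ => (p/t)^S.card * (p - p/t)^(n - S.card)) := by
            rw [EventuallyLE, ae_restrict_iff' measurableSet_Ioi]
            filter_upwards with t ht
            simp only [Set.mem_Ioi] at ht
            have ht0 : 0 < t := by linarith
            have h1 : 0 ≤ p/t := le_of_lt (div_pos hp0 ht0)
            have h2 : 0 ≤ p - p/t := by
              rw [sub_nonneg, div_le_iff₀ ht0]; nlinarith
            positivity
          rw [← MeasureTheory.ofReal_integral_eq_lintegral_ofReal hint hnnae, hval]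
  have hsum : ∑ S ∈ 𝒮, ENNReal.ofReal (h S.card)
      = ∑ j ∈ Finset.Icc ℓ n, (n.choose j) • ENNReal.ofReal (h j) := by
    have hbiU : 𝒮 = (Finset.Icc ℓ n).biUnion (fun j => Finset.powersetCard j univ) := by
      ext S
      simp only [h𝒮, Finset.mem_filter, Finset.mem_univ, true_and, Finset.mem_biUnion,
        Finset.mem_Icc, Finset.mem_powersetCard]
      constructor
      · intro hcard
        exact ⟨S.card, ⟨hcard, by simpa using Finset.card_le_univ S⟩,
          Finset.subset_univ S, rfl⟩
      · rintro ⟨j, ⟨hj1, _⟩, _, rfl⟩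
        exact hj1
    rw [hbiU, Finset.sum_biUnion]
    · apply Finset.sum_congr rfl
      intro j _
      have : ∀ S ∈ Finset.powersetCard j (univ : Finset (Fin n)),
          ENNReal.ofReal (h S.card) = ENNReal.ofReal (h j) := by
        intro S hS
        rw [(Finset.mem_powersetCard.mp hS).2]
      rw [Finset.sum_congr rfl this, Finset.sum_const, Finset.card_powersetCard]
      simp
    · intro a _ b _ hab
      apply Finset.disjoint_left.mpr
      intro S h1 h2
      exact hab (by rw [← (Finset.mem_powersetCard.mp h1).2, ← (Finset.mem_powersetCard.mp h2).2])
  rw [hsum] at hpart2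
  calc (∫⁻ t in Set.Ioc (0:ℝ) 1, ((Pn n).restrict A') {x | t < f x})
        + ∫⁻ t in Ioi (1:ℝ), ((Pn n).restrict A') {x | t < f x}
      ≤ ENNReal.ofReal (p^n) + ∑ j ∈ Finset.Icc ℓ n, (n.choose j) • ENNReal.ofReal (h j) :=
        add_le_add hpart1 hpart2
    _ = ENNReal.ofReal (p^n + ∑ j ∈ Finset.Icc ℓ n, (n.choose j : ℝ) * h j) := by
        have e1 : ∀ j ∈ Finset.Icc ℓ n, (n.choose j) • ENNReal.ofReal (h j)
            = ENNReal.ofReal ((n.choose j : ℝ) * h j) := by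
          intro j _
          rw [nsmul_eq_mul, ← ENNReal.ofReal_natCast (n.choose j),
            ← ENNReal.ofReal_mul (by positivity)]
        rw [Finset.sum_congr rfl e1, ← ENNReal.ofReal_sum_of_nonneg, ← ENNReal.ofReal_add]
        · positivity
        · apply Finset.sum_nonneg; intro j _; positivity
        · intro j _; positivity
    _ ≤ ENNReal.ofReal (((n:ℝ)/((ℓ:ℝ)-1)) * p^n) := by
        apply ENNReal.ofReal_le_ofReal
        have e2 : ∀ j ∈ Finset.Icc ℓ n, (n.choose j : ℝ) * h j
            = p^n * ((n:ℝ) * (1/((j:ℝ)-1) - 1/(j:ℝ))) := by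
          intro j hj
          simp only [Finset.mem_Icc] at hj
          rw [hh]
          rw [← choose_term (le_trans hl2 hj.1) hj.2]
          ring
        rw [Finset.sum_congr rfl e2, ← Finset.mul_sum, ← Finset.mul_sum,
          telescope_sum hl2 n hln]
        have hℓ1 : (1:ℝ) ≤ (ℓ:ℝ) - 1 := by
          have : (2:ℝ) ≤ (ℓ:ℝ) := by exact_mod_cast hl2
          linarith
        have hn0 : (0:ℝ) < (n:ℝ) := by exact_mod_cast hn
        have hpn : (0:ℝ) < p^n := by positivity
        have : p ^ n + p ^ n * ((n:ℝ) * (1 / ((ℓ:ℝ) - 1) - 1 / (n:ℝ)))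
            = ((n:ℝ)/((ℓ:ℝ)-1)) * p^n := by
          field_simp
          ring
        rw [this]


/-- For `1 ≤ n`, `2 ≤ ℓ ≤ n` and a real `c ≥ 4n/(ℓ-1)` (or, when `ℓ = 2`,
merely `c ≥ n`), for all `p ∈ (0,1)` one has
`(1 - p^c)·p^n ≥ Pr[W_{ℓ,n} > p ∧ X_{(1),n} < p]`, i.e. the conditional probability that the
maximum of `c` i.i.d. uniforms exceeds `p` given `X_{(1),n} < p` is at least
`Pr[W_{ℓ,n} > p | X_{(1),n} < p]`. -/
theorem stmt2 (n ℓ : ℕ) (c : ℝ) (hn : 1 ≤ n) (hℓ2 : 2 ≤ ℓ) (hℓn : ℓ ≤ n)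
    (hc : (4 * n : ℝ) / ((ℓ : ℝ) - 1) ≤ c ∨ (ℓ = 2 ∧ (n : ℝ) ≤ c)) :
    ∀ p ∈ Set.Ioo (0 : ℝ) 1,
      (P₂ n {ω : (Fin n → ℝ) × ℝ |
          p < Wvar ℓ ω.1 ω.2 ∧ kthLargest ω.1 1 < p}).toReal ≤ (1 - p ^ c) * p ^ n := by
  intro p hp
  obtain ⟨hp0, hp1⟩ := hp
  -- arithmetic facts about ℓ, n, c and m = ⌊c⌋
  have hl1R : (1:ℝ) ≤ (ℓ:ℝ) - 1 := by
    have : (2:ℝ) ≤ (ℓ:ℝ) := by exact_mod_cast hℓ2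
    linarith
  have hl1R' : (0:ℝ) < (ℓ:ℝ) - 1 := by linarith
  have hnR : (1:ℝ) ≤ (n:ℝ) := by exact_mod_cast hn
  have hrge1 : (1:ℝ) ≤ (n:ℝ)/((ℓ:ℝ)-1) := by
    rw [le_div_iff₀ hl1R']
    have : (ℓ:ℝ) ≤ (n:ℝ) := by exact_mod_cast hℓn
    linarith
  set m : ℕ := ⌊c⌋₊ with hm
  have hc0 : (1:ℝ) ≤ c := by
    rcases hc with h | ⟨_, h⟩
    · have h4 : (n:ℝ)/((ℓ:ℝ)-1) ≤ 4*(n:ℝ)/((ℓ:ℝ)-1) := by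
        rw [div_le_div_iff₀ hl1R' hl1R']
        nlinarith
      linarith
    · linarith
  have hmc : (m:ℝ) ≤ c := Nat.floor_le (by linarith)
  have hm1 : 1 ≤ m := by
    rw [hm]
    exact Nat.le_floor (by exact_mod_cast hc0)
  have hrm : (n:ℝ)/((ℓ:ℝ)-1) ≤ (m:ℝ) := by
    rcases hc with h | ⟨hl2eq, h⟩
    · have hfl : c - 1 < (m:ℝ) := Nat.sub_one_lt_floor c
      have h4 : 4*(n:ℝ)/((ℓ:ℝ)-1) ≤ c := h
      have : (n:ℝ)/((ℓ:ℝ)-1) + 3 * ((n:ℝ)/((ℓ:ℝ)-1)) = 4*(n:ℝ)/((ℓ:ℝ)-1) := by ring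
      nlinarith [hrge1]
    · subst hl2eq
      have hnm : (n:ℝ) ≤ (m:ℝ) := by
        exact_mod_cast Nat.le_floor (by exact_mod_cast h : ((n:ℕ):ℝ) ≤ c)
      push_cast
      rw [div_le_iff₀ (by norm_num : (0:ℝ) < 2 - 1)]
      linarith
  -- the event and its measure via Fubini
  set A' : Set (Fin n → ℝ) := {x : Fin n → ℝ | ∀ i, x i < p} with hA'
  set E : Set ((Fin n → ℝ) × ℝ) :=
    {ω : (Fin n → ℝ) × ℝ | p < Wvar ℓ ω.1 ω.2 ∧ kthLargest ω.1 1 < p} with hE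
  have hmk : Measurable (fun x : Fin n → ℝ => kthLargest x ℓ) :=
    measurable_kthLargest (by omega) hℓn
  have hmE : MeasurableSet E := by
    have hWm : Measurable (fun ω : (Fin n → ℝ) × ℝ => Wvar ℓ ω.1 ω.2) := by
      apply Measurable.add (hmk.comp measurable_fst)
      exact measurable_snd.mul ((measurable_const.sub (hmk.comp measurable_fst)))
    have h1 : MeasurableSet {ω : (Fin n → ℝ) × ℝ | p < Wvar ℓ ω.1 ω.2} :=
      measurableSet_lt measurable_const hWm
    have h2 : MeasurableSet {ω : (Fin n → ℝ) × ℝ | kthLargest ω.1 1 < p} :=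
      measurableSet_lt ((measurable_kthLargest (le_refl 1) hn).comp measurable_fst)
        measurable_const
    exact h1.inter h2
  have hP₂ : P₂ n = (Pn n).prod unif := rfl
  have hfub : P₂ n E = ∫⁻ x, unif (Prod.mk x ⁻¹' E) ∂(Pn n) := by
    rw [hP₂, Measure.prod_apply hmE]
  have hxlt : ∀ x ∈ A', kthLargest x ℓ < p := by
    intro x hx
    obtain ⟨j, hj⟩ := kthLargest_eq_apply x (by omega : 1 ≤ ℓ) hℓn
    rw [hj]; exact hx j
  have hsec : ∀ x, unif (Prod.mk x ⁻¹' E)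
      = A'.indicator (fun x => ENNReal.ofReal ((1-p)/(1 - kthLargest x ℓ))) x := by
    intro x
    by_cases hx : x ∈ A'
    · rw [Set.indicator_of_mem hx]
      have hkl : kthLargest x ℓ < p := hxlt x hx
      have hd : 0 < 1 - kthLargest x ℓ := by linarith
      have hpre : Prod.mk x ⁻¹' E = Ioi ((p - kthLargest x ℓ)/(1 - kthLargest x ℓ)) := by
        ext u
        simp only [hE, Set.mem_preimage, Set.mem_setOf_eq, Set.mem_Ioi, Wvar]
        rw [(kthLargest_one_lt_iff x hn p)]
        constructor
        · rintro ⟨h1, _⟩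
          rw [div_lt_iff₀ hd]
          nlinarith
        · intro h1
          refine ⟨?_, hx⟩
          rw [div_lt_iff₀ hd] at h1
          nlinarith
      rw [hpre, unif_Ioi]
      · congr 1
        field_simp
        ring
      · apply div_nonneg (by linarith) (le_of_lt hd)
      · rw [div_le_one hd]
        linarith
    · rw [Set.indicator_of_notMem hx]
      have hpre : Prod.mk x ⁻¹' E = ∅ := by
        ext u
        simp only [hE, Set.mem_preimage, Set.mem_setOf_eq, Set.mem_empty_iff_false, iff_false]
        rintro ⟨_, h2⟩
        exact hx ((kthLargest_one_lt_iff x hn p).mp h2)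
      rw [hpre, measure_empty]
  have hPrE : P₂ n E = ∫⁻ x in A', ENNReal.ofReal ((1-p)/(1 - kthLargest x ℓ)) ∂(Pn n) := by
    rw [hfub, lintegral_congr hsec, lintegral_indicator measurableSet_A']
  -- pointwise star inequality on A' ∩ cube
  have hq0 : (0:ℝ) < 1 - p := by linarith
  have hstar : ∀ x, (∀ i, x i ∈ Icc (0:ℝ) 1) → x ∈ A' →
      ENNReal.ofReal ((1-p)/(1 - kthLargest x ℓ)) + ENNReal.ofReal ((m:ℝ) * p^m * (1-p))
        ≤ ENNReal.ofReal (1 - p^m)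
          + ENNReal.ofReal (p^m * (1-p)) * ENNReal.ofReal (p/(p - kthLargest x ℓ)) := by
    intro x hcube hx
    set z := kthLargest x ℓ with hz
    have hz0 : 0 ≤ z := by
      obtain ⟨j, hj⟩ := kthLargest_eq_apply x (by omega : 1 ≤ ℓ) hℓn
      rw [hz, hj]; exact (hcube j).1
    have hzp : z < p := hxlt x hx
    have hy0 : 0 ≤ z/p := div_nonneg hz0 (le_of_lt hp0)
    have hy1 : z/p < 1 := by rw [div_lt_one hp0]; exact hzp
    have hst := star_ineq hp0 hp1 hy0 hy1 m
    have hpy : p * (z/p) = z := by field_simp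
    have h1y : 1 - z/p = (p - z)/p := by field_simp
    rw [hpy, h1y] at hst
    have hst2 : (1-p)/(1 - z) + (m:ℝ) * p^m * (1-p)
        ≤ (1 - p^m) + (p^m * (1-p)) * (p/(p - z)) := by
      have hd1 : 0 < 1 - z := by linarith
      have := mul_le_mul_of_nonneg_left hst (le_of_lt hq0)
      calc (1-p)/(1 - z) + (m:ℝ) * p^m * (1-p)
          = (1-p) * (1/(1-z) + (m:ℝ) * p^m) := by field_simp
        _ ≤ (1-p) * ((1 - p^m)/(1 - p) + p^m/((p - z)/p)) := this
        _ = (1 - p^m) + (p^m * (1-p)) * (p/(p - z)) := by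
            have hdz : 0 < p - z := by linarith
            field_simp
    calc ENNReal.ofReal ((1-p)/(1 - z)) + ENNReal.ofReal ((m:ℝ) * p^m * (1-p))
        = ENNReal.ofReal ((1-p)/(1 - z) + (m:ℝ) * p^m * (1-p)) := by
          rw [ENNReal.ofReal_add]
          · apply div_nonneg (le_of_lt hq0); linarith
          · positivity
      _ ≤ ENNReal.ofReal ((1 - p^m) + (p^m * (1-p)) * (p/(p - z))) :=
          ENNReal.ofReal_le_ofReal hst2
      _ ≤ ENNReal.ofReal (1 - p^m)
          + ENNReal.ofReal ((p^m * (1-p)) * (p/(p - z))) := ENNReal.ofReal_add_le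
      _ = ENNReal.ofReal (1 - p^m)
          + ENNReal.ofReal (p^m * (1-p)) * ENNReal.ofReal (p/(p - z)) := by
          rw [ENNReal.ofReal_mul (by positivity)]
  -- integrate the star inequality over A'
  have hq0' : (0:ℝ) ≤ 1 - p := le_of_lt hq0
  have hpm1 : p ^ m ≤ 1 := pow_le_one₀ (le_of_lt hp0) (le_of_lt hp1)
  have hfmeas2 : Measurable (fun x : Fin n → ℝ => ENNReal.ofReal (p/(p - kthLargest x ℓ))) :=
    (measurable_const.div (measurable_const.sub hmk)).ennreal_ofReal
  have hPA : Pn n A' = ENNReal.ofReal (p^n) := by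
    rw [hA', Pn_lt_p (le_of_lt hp0) (le_of_lt hp1), ENNReal.ofReal_pow (le_of_lt hp0)]
  have hae : ∀ᵐ x ∂((Pn n).restrict A'), (∀ i, x i ∈ Icc (0:ℝ) 1) ∧ x ∈ A' :=
    (ae_restrict_of_ae Pn_cube_ae).and (ae_restrict_mem measurableSet_A')
  have hchain : P₂ n E + ENNReal.ofReal ((m:ℝ)*p^m*(1-p)) * ENNReal.ofReal (p^n)
      ≤ ENNReal.ofReal ((1-p^m)*p^n)
        + ENNReal.ofReal ((m:ℝ)*p^m*(1-p)) * ENNReal.ofReal (p^n) := by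
    calc P₂ n E + ENNReal.ofReal ((m:ℝ)*p^m*(1-p)) * ENNReal.ofReal (p^n)
        = ∫⁻ x in A', (ENNReal.ofReal ((1-p)/(1 - kthLargest x ℓ))
            + ENNReal.ofReal ((m:ℝ)*p^m*(1-p))) ∂(Pn n) := by
          rw [lintegral_add_right _ measurable_const, lintegral_const,
            Measure.restrict_apply_univ, hPA, hPrE]
      _ ≤ ∫⁻ x in A', (ENNReal.ofReal (1 - p^m)
            + ENNReal.ofReal (p^m * (1-p)) * ENNReal.ofReal (p/(p - kthLargest x ℓ)))
            ∂(Pn n) := by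
          apply lintegral_mono_ae
          filter_upwards [hae] with x hx
          exact hstar x hx.1 hx.2
      _ = ENNReal.ofReal (1 - p^m) * ENNReal.ofReal (p^n)
          + ENNReal.ofReal (p^m * (1-p))
            * ∫⁻ x in A', ENNReal.ofReal (p/(p - kthLargest x ℓ)) ∂(Pn n) := by
          rw [lintegral_add_left measurable_const, lintegral_const,
            Measure.restrict_apply_univ, hPA, lintegral_const_mul _ hfmeas2]
      _ ≤ ENNReal.ofReal (1 - p^m) * ENNReal.ofReal (p^n)
          + ENNReal.ofReal (p^m * (1-p)) * ENNReal.ofReal (((n:ℝ)/((ℓ:ℝ)-1)) * p^n) := by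
          apply add_le_add_right
          exact mul_le_mul_right (key_bound hn hℓ2 hℓn ⟨hp0, hp1⟩) _
      _ ≤ ENNReal.ofReal ((1-p^m)*p^n)
          + ENNReal.ofReal ((m:ℝ)*p^m*(1-p)) * ENNReal.ofReal (p^n) := by
          apply add_le_add
          · rw [← ENNReal.ofReal_mul (by linarith)]
          · rw [← ENNReal.ofReal_mul (by positivity), ← ENNReal.ofReal_mul (by positivity)]
            apply ENNReal.ofReal_le_ofReal
            have hpn0 : (0:ℝ) ≤ p^n := by positivity
            have h1 : p^m * (1-p) * ((n:ℝ)/((ℓ:ℝ)-1) * p^n)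
                ≤ p^m * (1-p) * ((m:ℝ) * p^n) := by
              apply mul_le_mul_of_nonneg_left ?_ (by positivity)
              exact mul_le_mul_of_nonneg_right hrm hpn0
            linarith
  have hfin : ENNReal.ofReal ((m:ℝ)*p^m*(1-p)) * ENNReal.ofReal (p^n) ≠ ⊤ :=
    ENNReal.mul_ne_top ENNReal.ofReal_ne_top ENNReal.ofReal_ne_top
  have hle := (ENNReal.add_le_add_iff_right hfin).mp hchain
  have htoR : (P₂ n E).toReal ≤ (1-p^m)*p^n := by
    apply ENNReal.toReal_le_of_le_ofReal ?_ hle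
    have : (0:ℝ) ≤ 1 - p^m := by linarith
    positivity
  refine le_trans htoR ?_
  apply mul_le_mul_of_nonneg_right ?_ (by positivity)
  have hrpow : p ^ c ≤ p ^ (m:ℝ) :=
    Real.rpow_le_rpow_of_exponent_ge hp0 (le_of_lt hp1) hmc
  rw [Real.rpow_natCast] at hrpow
  linarith

end Aux
end

section
/- Let n ≥ 2 be an integer. Then W_{2,n} is identically distributed to the maximum of n i.i.d. uniform draws from [0,1]; that is, for every p ∈ [0,1], Pr[W_{2,n} ≤ p] = p^n. -/
open MeasureTheory Set

/-- The sample space for `n` i.i.d. uniforms `X` together with the independent auxiliary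
uniform defining `W_{2,n}`. -/
noncomputable def P₃ (n : ℕ) : Measure ((Fin n → ℝ) × ℝ) :=
  (Measure.pi fun _ : Fin n => unif).prod unif

variable {n : ℕ}

lemma kthLargest_eq {n : ℕ} (hn : 2 ≤ n) (x : Fin n → ℝ) :
    kthLargest x 2 = x (Tuple.sort x ⟨n - 2, by omega⟩) := by
  rw [kthLargest, dif_pos (by omega)]

lemma kthLargest_le_iff_s3 {n : ℕ} (hn : 2 ≤ n) (x : Fin n → ℝ) (t : ℝ) :
    kthLargest x 2 ≤ t ↔ ∃ i, ∀ j, j ≠ i → x j ≤ t := by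
  rw [kthLargest_eq hn]
  set σ := Tuple.sort x with hσ
  have hmono : Monotone (x ∘ σ) := Tuple.monotone_sort x
  have ha : (⟨n - 2, by omega⟩ : Fin n) ≤ ⟨n - 1, by omega⟩ := by
    rw [Fin.mk_le_mk]; omega
  constructor
  · intro h
    refine ⟨σ ⟨n - 1, by omega⟩, fun j hj => ?_⟩
    have hj' : j = σ (σ.symm j) := (σ.apply_symm_apply j).symm
    have hne : (σ.symm j : ℕ) ≠ n - 1 := by
      intro he
      apply hj
      rw [hj']
      congr 1
      exact Fin.ext he
    have hle : σ.symm j ≤ (⟨n - 2, by omega⟩ : Fin n) := by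
      have h2 := (σ.symm j).isLt
      rw [Fin.le_def]; simp only [Fin.val_mk]
      omega
    calc x j = (x ∘ σ) (σ.symm j) := by
            conv_lhs => rw [hj']
            rfl
      _ ≤ (x ∘ σ) ⟨n - 2, by omega⟩ := hmono hle
      _ ≤ t := h
  · rintro ⟨i, hi⟩
    by_cases hc : σ ⟨n - 2, by omega⟩ = i
    · have hne : σ ⟨n - 1, by omega⟩ ≠ i := by
        rw [← hc]
        intro he
        have h3 := σ.injective he
        rw [Fin.mk_eq_mk] at h3
        omega
      calc x (σ ⟨n - 2, by omega⟩) = (x ∘ σ) ⟨n-2, by omega⟩ := rfl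
        _ ≤ (x ∘ σ) ⟨n-1, by omega⟩ := hmono ha
        _ ≤ t := hi _ hne
    · exact hi _ hc

lemma unif_Iic (t : ℝ) : unif (Iic t) = ENNReal.ofReal (max 0 (min t 1)) := by
  rw [unif, Measure.restrict_apply measurableSet_Iic]
  have h1 : Iic t ∩ Icc 0 1 = Icc 0 (min t 1) := by
    ext y
    simp only [mem_inter_iff, mem_Iic, mem_Icc, le_min_iff]
    constructor
    · rintro ⟨a, b, c⟩; exact ⟨b, a, c⟩
    · rintro ⟨a, b, c⟩; exact ⟨b, a, c⟩
  rw [h1, Real.volume_Icc]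
  rcases le_or_gt 0 (min t 1) with h | h
  · rw [max_eq_right h]; ring_nf
  · rw [max_eq_left h.le, ENNReal.ofReal_eq_zero.2 (by linarith), ENNReal.ofReal_zero]

lemma setA_eq (i : Fin n) (t : ℝ) :
    {x : Fin n → ℝ | ∀ j, j ≠ i → x j ≤ t}
      = Set.pi univ (fun j => if j = i then univ else Iic t) := by
  ext x
  simp only [mem_setOf_eq, mem_pi, mem_univ, forall_true_left]
  constructor
  · intro h j
    by_cases hj : j = i
    · simp [hj]
    · simp only [hj, if_false, mem_Iic]; exact h j hj
  · intro h j hj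
    have := h j
    simp only [hj, if_false, mem_Iic] at this
    exact this

lemma measA (i : Fin n) (t : ℝ) :
    (Measure.pi fun _ : Fin n => unif) {x | ∀ j, j ≠ i → x j ≤ t}
      = (unif (Iic t)) ^ (n - 1) := by
  rw [setA_eq, Measure.pi_pi]
  rw [← Finset.mul_prod_erase _ _ (Finset.mem_univ i)]
  rw [if_pos rfl, measure_univ, one_mul]
  rw [Finset.prod_congr rfl (fun j hj => by
    rw [if_neg (Finset.ne_of_mem_erase hj)])]
  rw [Finset.prod_const, Finset.card_erase_of_mem (Finset.mem_univ i),
    Finset.card_univ, Fintype.card_fin]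

lemma measB (t : ℝ) :
    (Measure.pi fun _ : Fin n => unif) {x | ∀ j, x j ≤ t} = (unif (Iic t)) ^ n := by
  have : {x : Fin n → ℝ | ∀ j, x j ≤ t} = Set.pi univ (fun _ => Iic t) := by
    ext x; simp only [mem_setOf_eq, mem_pi, mem_univ, forall_true_left, mem_Iic]
  rw [this, Measure.pi_pi, Finset.prod_const, Finset.card_univ, Fintype.card_fin]

lemma measurableSetA (i : Fin n) (t : ℝ) :
    MeasurableSet {x : Fin n → ℝ | ∀ j, j ≠ i → x j ≤ t} := by
  rw [setA_eq]
  exact MeasurableSet.pi (countable_univ) (fun j _ => by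
    by_cases hj : j = i <;> simp [hj, measurableSet_Iic])

lemma measurableSetB (t : ℝ) : MeasurableSet {x : Fin n → ℝ | ∀ j, x j ≤ t} := by
  have : {x : Fin n → ℝ | ∀ j, x j ≤ t} = Set.pi univ (fun _ => Iic t) := by
    ext x; simp only [mem_setOf_eq, mem_pi, mem_univ, forall_true_left, mem_Iic]
  rw [this]
  exact MeasurableSet.pi countable_univ (fun _ _ => measurableSet_Iic)

lemma cdf_s (hn : 2 ≤ n) (t : ℝ) :
    (Measure.pi fun _ : Fin n => unif) {x | kthLargest x 2 ≤ t}
      = (unif (Iic t)) ^ n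
        + n * ((unif (Iic t)) ^ (n - 1) - (unif (Iic t)) ^ n) := by
  set π := (Measure.pi fun _ : Fin n => unif) with hπ
  set A : Fin n → Set (Fin n → ℝ) := fun i => {x | ∀ j, j ≠ i → x j ≤ t} with hA
  set B : Set (Fin n → ℝ) := {x | ∀ j, x j ≤ t} with hB
  have hBA : ∀ i, B ⊆ A i := fun i x hx j _ => hx j
  have hset : {x : Fin n → ℝ | kthLargest x 2 ≤ t} = ⋃ i, A i := by
    ext x
    simp only [mem_setOf_eq, mem_iUnion, kthLargest_le_iff_s3 hn, hA, mem_setOf_eq]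
  have hinter : ∀ i j : Fin n, i ≠ j → A i ∩ A j ⊆ B := by
    intro i j hij x hx k
    rcases hx with ⟨h1, h2⟩
    by_cases hk : k = i
    · exact h2 k (hk ▸ hij)
    · exact h1 k hk
  have hsplit : (⋃ i, A i) = B ∪ ⋃ i, (A i \ B) := by
    ext x
    simp only [mem_iUnion, mem_union, mem_diff]
    constructor
    · rintro ⟨i, hi⟩
      by_cases hx : x ∈ B
      · exact Or.inl hx
      · exact Or.inr ⟨i, hi, hx⟩
    · rintro (hx | ⟨i, hi, _⟩)
      · exact ⟨⟨0, by omega⟩, hBA _ hx⟩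
      · exact ⟨i, hi⟩
  have hdisj : Pairwise (Function.onFun Disjoint (fun i => A i \ B)) := by
    intro i j hij
    rw [Function.onFun, Set.disjoint_left]
    rintro x ⟨hxi, hxB⟩ ⟨hxj, _⟩
    exact hxB (hinter i j hij ⟨hxi, hxj⟩)
  rw [hset, hsplit, measure_union ?_ ((MeasurableSet.iUnion
      (fun i => (measurableSetA i t).diff (measurableSetB t)))),
    measure_iUnion hdisj (fun i => (measurableSetA i t).diff (measurableSetB t))]
  · have hd : ∀ i, π (A i \ B) = (unif (Iic t)) ^ (n-1) - (unif (Iic t)) ^ n := by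
      intro i
      rw [measure_diff (hBA i) (measurableSetB t).nullMeasurableSet (measure_ne_top π B)]
      rw [hπ, hA]
      rw [measA i t]
      congr 1
      exact measB t
    rw [tsum_fintype]
    rw [Finset.sum_congr rfl (fun i _ => hd i), Finset.sum_const, Finset.card_univ,
      Fintype.card_fin, nsmul_eq_mul]
    congr 1
    exact measB t
  · rw [Set.disjoint_right]
    rintro x hx
    simp only [mem_iUnion, mem_diff] at hx
    rcases hx with ⟨i, _, hxB⟩
    exact hxB

noncomputable def dens (n : ℕ) (s : ℝ) : ENNReal :=
  ENNReal.ofReal ((n * (n-1) : ℝ) * s^(n-2) * (1-s))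

noncomputable def ρ (n : ℕ) : Measure ℝ := (volume.restrict (Icc 0 1)).withDensity (dens n)

lemma poly_integral (n : ℕ) (hn : 2 ≤ n) (c : ℝ) :
    ∫ s in (0:ℝ)..c, (n * (n-1) : ℝ) * s^(n-2) * (1-s)
      = (n:ℝ) * c^(n-1) - ((n:ℝ) - 1) * c^n := by
  have h1 : ∀ s : ℝ, (n * (n-1) : ℝ) * s^(n-2) * (1-s)
      = (n * (n-1) : ℝ) * s^(n-2) - (n * (n-1) : ℝ) * s^(n-1) := by
    intro s
    have : s ^ (n - 1) = s ^ (n-2) * s := by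
      rw [← pow_succ]
      congr 1
      omega
    rw [this]; ring
  simp_rw [h1]
  rw [intervalIntegral.integral_sub (f := fun s : ℝ => (n * (n-1) : ℝ) * s^(n-2)) (g := fun s : ℝ => (n * (n-1) : ℝ) * s^(n-1)) ((continuous_const.mul (continuous_pow _)).intervalIntegrable _ _) ((continuous_const.mul (continuous_pow _)).intervalIntegrable _ _),
    intervalIntegral.integral_const_mul, intervalIntegral.integral_const_mul,
    integral_pow, integral_pow]
  have h2 : n - 2 + 1 = n - 1 := by omega
  have h3 : n - 1 + 1 = n := by omega
  rw [h2, h3]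
  have h4 : ((n:ℝ) - 1) ≠ 0 := by
    have : (2:ℝ) ≤ n := by exact_mod_cast hn
    intro h; linarith
  have h5 : (n:ℝ) ≠ 0 := by positivity
  have hc2 : ((n - 2 : ℕ) : ℝ) = (n:ℝ) - 2 := by
    rw [Nat.cast_sub (by omega)]; norm_num
  have hc1 : ((n - 1 : ℕ) : ℝ) = (n:ℝ) - 1 := by
    rw [Nat.cast_sub (by omega)]; norm_num
  rw [hc2, hc1, zero_pow (show n - 1 ≠ 0 by omega), zero_pow (show n ≠ 0 by omega)]
  have h4' : (-1 + (n:ℝ)) ≠ 0 := by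
    have : (2:ℝ) ≤ n := by exact_mod_cast hn
    intro h; linarith
  have key : ((-1:ℝ) + n)⁻¹ * (-1 + (n:ℝ)) = 1 := inv_mul_cancel₀ h4'
  have d1 : (n:ℝ) - 2 + 1 = (n:ℝ) - 1 := by ring
  have d2 : (n:ℝ) - 1 + 1 = (n:ℝ) := by ring
  rw [d1, d2]
  field_simp
  ring

lemma Iic_inter_Icc (t : ℝ) : Iic t ∩ Icc 0 1 = Icc 0 (min t 1) := by
  ext y
  simp only [mem_inter_iff, mem_Iic, mem_Icc, le_min_iff]
  constructor
  · rintro ⟨a, b, c⟩; exact ⟨b, a, c⟩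
  · rintro ⟨a, b, c⟩; exact ⟨b, a, c⟩

lemma dens_cont (n : ℕ) : Continuous fun s : ℝ => (n * (n-1) : ℝ) * s^(n-2) * (1-s) := by
  continuity

lemma rho_Iic (n : ℕ) (hn : 2 ≤ n) (t : ℝ) :
    ρ n (Iic t) = (unif (Iic t)) ^ n
      + n * ((unif (Iic t)) ^ (n - 1) - (unif (Iic t)) ^ n) := by
  rw [ρ, withDensity_apply _ measurableSet_Iic, Measure.restrict_restrict measurableSet_Iic,
    Iic_inter_Icc, unif_Iic]
  rcases lt_or_ge t 0 with ht | ht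
  · have he : Icc (0:ℝ) (min t 1) = ∅ := Icc_eq_empty (by simp only [not_le]; exact lt_of_le_of_lt (min_le_left t 1) ht)
    have hm : max 0 (min t 1) = 0 := max_eq_left (le_trans (min_le_left _ _) ht.le)
    rw [he, hm, Measure.restrict_empty, lintegral_zero_measure, ENNReal.ofReal_zero,
      zero_pow (show n ≠ 0 by omega), zero_pow (show n - 1 ≠ 0 by omega)]
    simp
  · set c := min t 1 with hc
    have hc0 : 0 ≤ c := le_min ht zero_le_one
    have hc1 : c ≤ 1 := min_le_right _ _
    have hm : max 0 c = c := max_eq_right hc0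
    rw [hm]
    have hnn : 0 ≤ᵐ[volume.restrict (Icc 0 c)]
        fun s : ℝ => (n * (n-1) : ℝ) * s^(n-2) * (1-s) := by
      filter_upwards [ae_restrict_mem measurableSet_Icc] with s hs
      have h1 : (0:ℝ) ≤ (n * (n-1) : ℝ) := by
        have : (2:ℝ) ≤ n := by exact_mod_cast hn
        nlinarith
      have h2 : (0:ℝ) ≤ s^(n-2) := pow_nonneg hs.1 _
      have h3 : (0:ℝ) ≤ 1 - s := by have := hs.2; linarith [hc1]
      positivity
    have hint : IntegrableOn (fun s : ℝ => (n * (n-1) : ℝ) * s^(n-2) * (1-s)) (Icc 0 c) :=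
      (dens_cont n).integrableOn_Icc
    have key : ∫⁻ s in Icc (0:ℝ) c, dens n s
        = ENNReal.ofReal (∫ s in Icc (0:ℝ) c, (n * (n-1) : ℝ) * s^(n-2) * (1-s)) := by
      rw [MeasureTheory.ofReal_integral_eq_lintegral_ofReal hint hnn]
      rfl
    rw [key, MeasureTheory.integral_Icc_eq_integral_Ioc,
      ← intervalIntegral.integral_of_le hc0, poly_integral n hn c]
    have hpow : c ^ n ≤ c ^ (n - 1) := pow_le_pow_of_le_one hc0 hc1 (by omega)
    rw [← ENNReal.ofReal_pow hc0, ← ENNReal.ofReal_pow hc0,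
      ← ENNReal.ofReal_sub _ (pow_nonneg hc0 _),
      show ((n:ENNReal)) = ENNReal.ofReal (n:ℝ) by rw [ENNReal.ofReal_natCast],
      ← ENNReal.ofReal_mul (by positivity),
      ← ENNReal.ofReal_add (pow_nonneg hc0 _) (by nlinarith)]
    congr 1
    ring

lemma meas_kth (hn : 2 ≤ n) : Measurable fun x : Fin n → ℝ => kthLargest x 2 := by
  apply measurable_of_Iic
  intro t
  have : (fun x : Fin n → ℝ => kthLargest x 2) ⁻¹' Iic t
      = ⋃ i, {x : Fin n → ℝ | ∀ j, j ≠ i → x j ≤ t} := by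
    ext x
    simp only [mem_preimage, mem_Iic, kthLargest_le_iff_s3 hn, mem_iUnion, mem_setOf_eq]
  rw [this]
  exact MeasurableSet.iUnion fun i => measurableSetA i t

lemma coord_Ico (i : Fin n) :
    ∀ᵐ x ∂(Measure.pi fun _ : Fin n => unif), x i ∈ Ico (0:ℝ) 1 := by
  rw [ae_iff]
  have hs : {x : Fin n → ℝ | ¬ x i ∈ Ico (0:ℝ) 1}
      = Set.pi univ (fun j => if j = i then (Ico (0:ℝ) 1)ᶜ else univ) := by
    ext x
    simp only [mem_setOf_eq, mem_pi, mem_univ, forall_true_left]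
    constructor
    · intro h j
      by_cases hj : j = i
      · subst hj; simp only [if_pos rfl, mem_compl_iff]; exact h
      · simp [hj]
    · intro h
      have := h i
      simp only [if_pos rfl, mem_compl_iff] at this
      exact this
  rw [hs, Measure.pi_pi]
  apply Finset.prod_eq_zero (Finset.mem_univ i)
  rw [if_pos rfl]
  have : (Ico (0:ℝ) 1)ᶜ ∩ Icc 0 1 = {1} := by
    ext y
    simp only [mem_inter_iff, mem_compl_iff, mem_Ico, mem_Icc, mem_singleton_iff, not_and, not_lt]
    constructor
    · rintro ⟨h1, h2, h3⟩; exact le_antisymm h3 (h1 h2)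
    · rintro rfl; exact ⟨fun _ => le_rfl, zero_le_one, le_rfl⟩
  rw [unif, Measure.restrict_apply (measurableSet_Ico.compl), this]
  exact measure_singleton 1

lemma kth_Ico (hn : 2 ≤ n) :
    ∀ᵐ x ∂(Measure.pi fun _ : Fin n => unif), kthLargest x 2 ∈ Ico (0:ℝ) 1 := by
  have h := ae_all_iff.2 (fun i : Fin n => coord_Ico i)
  filter_upwards [h] with x hx
  rw [kthLargest_eq hn]
  exact hx _

lemma poly_integral2 (n : ℕ) (hn : 2 ≤ n) (p : ℝ) :
    ∫ s in (0:ℝ)..p, (n * (n-1) : ℝ) * s^(n-2) * (p-s) = p ^ n := by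
  have h1 : ∀ s : ℝ, (n * (n-1) : ℝ) * s^(n-2) * (p-s)
      = ((n * (n-1) : ℝ) * p) * s^(n-2) - (n * (n-1) : ℝ) * s^(n-1) := by
    intro s
    have : s ^ (n - 1) = s ^ (n-2) * s := by
      rw [← pow_succ]; congr 1; omega
    rw [this]; ring
  simp_rw [h1]
  rw [intervalIntegral.integral_sub (f := fun s : ℝ => ((n * (n-1) : ℝ) * p) * s^(n-2)) (g := fun s : ℝ => (n * (n-1) : ℝ) * s^(n-1))
    ((continuous_const.mul (continuous_pow _)).intervalIntegrable _ _)
    ((continuous_const.mul (continuous_pow _)).intervalIntegrable _ _),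
    intervalIntegral.integral_const_mul, intervalIntegral.integral_const_mul,
    integral_pow, integral_pow]
  have h2 : n - 2 + 1 = n - 1 := by omega
  have h3 : n - 1 + 1 = n := by omega
  rw [h2, h3]
  have hc2 : ((n - 2 : ℕ) : ℝ) = (n:ℝ) - 2 := by
    rw [Nat.cast_sub (by omega)]; norm_num
  have hc1 : ((n - 1 : ℕ) : ℝ) = (n:ℝ) - 1 := by
    rw [Nat.cast_sub (by omega)]; norm_num
  have h5 : (n:ℝ) ≠ 0 := by positivity
  have h4' : (-1 + (n:ℝ)) ≠ 0 := by
    have : (2:ℝ) ≤ n := by exact_mod_cast hn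
    intro h; linarith
  have hps : p * p ^ (n - 1) = p ^ n := by
    rw [← pow_succ', h3]
  rw [hc2, hc1, zero_pow (show n - 1 ≠ 0 by omega), zero_pow (show n ≠ 0 by omega),
    sub_zero, sub_zero]
  have hn1 : ((n:ℝ) - 1) ≠ 0 := by intro h; apply h4'; linarith
  have d1 : (n:ℝ) - 2 + 1 = (n:ℝ) - 1 := by ring
  have d2 : (n:ℝ) - 1 + 1 = (n:ℝ) := by ring
  rw [d1, d2]
  have e1 : (n:ℝ)*((n:ℝ)-1)*p*(p^(n-1)/((n:ℝ)-1)) = (n:ℝ) * p^n := by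
    rw [div_eq_mul_inv]
    calc (n:ℝ)*((n:ℝ)-1)*p*(p^(n-1)*((n:ℝ)-1)⁻¹)
        = (n:ℝ) * (((n:ℝ)-1) * ((n:ℝ)-1)⁻¹) * (p * p^(n-1)) := by ring
      _ = (n:ℝ) * p^n := by rw [mul_inv_cancel₀ hn1, hps, mul_one]
  have e2 : (n:ℝ)*((n:ℝ)-1)*(p^n/(n:ℝ)) = ((n:ℝ)-1) * p^n := by
    rw [div_eq_mul_inv]
    calc (n:ℝ)*((n:ℝ)-1)*(p^n*((n:ℝ))⁻¹)
        = ((n:ℝ) * ((n:ℝ))⁻¹) * (((n:ℝ)-1) * p^n) := by ring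
      _ = ((n:ℝ)-1) * p^n := by rw [mul_inv_cancel₀ h5, one_mul]
  rw [e1, e2]
  ring

lemma map_kth (hn : 2 ≤ n) :
    Measure.map (fun x : Fin n → ℝ => kthLargest x 2)
      (Measure.pi fun _ : Fin n => unif) = ρ n := by
  haveI : IsProbabilityMeasure (Measure.map (fun x : Fin n → ℝ => kthLargest x 2)
      (Measure.pi fun _ : Fin n => unif)) :=
    Measure.isProbabilityMeasure_map (meas_kth hn).aemeasurable
  refine Measure.ext_of_Iic _ _ (fun t => ?_)
  rw [Measure.map_apply (meas_kth hn) measurableSet_Iic]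
  have : (fun x : Fin n → ℝ => kthLargest x 2) ⁻¹' Iic t = {x | kthLargest x 2 ≤ t} := rfl
  rw [this, cdf_s hn t, rho_Iic n hn t]

/-- For `n ≥ 2`, the random variable `W_{2,n}` is identically distributed to
the maximum of `n` i.i.d. uniform draws from `[0,1]`: for every `p ∈ [0,1]`,
`Pr[W_{2,n} ≤ p] = p^n`. -/
theorem stmt3 (n : ℕ) (hn : 2 ≤ n) :
    ∀ p ∈ Set.Icc (0 : ℝ) 1,
      (P₃ n {ω : (Fin n → ℝ) × ℝ | Wvar 2 ω.1 ω.2 ≤ p}).toReal = p ^ n := by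
  rintro p ⟨hp0, hp1⟩
  set π := (Measure.pi fun _ : Fin n => unif) with hπ
  have hmeasW : Measurable fun ω : (Fin n → ℝ) × ℝ => Wvar 2 ω.1 ω.2 := by
    have hs : Measurable fun ω : (Fin n → ℝ) × ℝ => kthLargest ω.1 2 :=
      (meas_kth hn).comp measurable_fst
    exact hs.add (measurable_snd.mul (measurable_const.sub hs))
  have hS : MeasurableSet {ω : (Fin n → ℝ) × ℝ | Wvar 2 ω.1 ω.2 ≤ p} :=
    hmeasW measurableSet_Iic
  have hmg : Measurable fun s : ℝ => ENNReal.ofReal ((p - s) / (1 - s)) :=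
    ((measurable_const.sub measurable_id).div (measurable_const.sub measurable_id)).ennreal_ofReal
  have step1 : P₃ n {ω : (Fin n → ℝ) × ℝ | Wvar 2 ω.1 ω.2 ≤ p}
      = ∫⁻ x, ENNReal.ofReal ((p - kthLargest x 2) / (1 - kthLargest x 2)) ∂π := by
    rw [P₃, Measure.prod_apply hS]
    refine lintegral_congr_ae ?_
    filter_upwards [kth_Ico hn] with x hx
    set s := kthLargest x 2 with hsdef
    have hs1 : 1 - s > 0 := by linarith [hx.2]
    have hpre : (Prod.mk x ⁻¹' {ω : (Fin n → ℝ) × ℝ | Wvar 2 ω.1 ω.2 ≤ p})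
        = Iic ((p - s) / (1 - s)) := by
      ext u
      simp only [mem_preimage, mem_setOf_eq, mem_Iic, Wvar, ← hsdef]
      rw [le_div_iff₀ hs1]
      constructor <;> intro h <;> linarith
    rw [hpre, unif_Iic]
    have hle1 : (p - s) / (1 - s) ≤ 1 := by
      rw [div_le_one hs1]; linarith
    rw [min_eq_left hle1]
    rcases le_or_gt 0 ((p - s) / (1 - s)) with h | h
    · rw [max_eq_right h]
    · rw [max_eq_left h.le, ENNReal.ofReal_zero,
        Eq.comm, ENNReal.ofReal_eq_zero]
      exact h.le
  have step2 : ∫⁻ x, ENNReal.ofReal ((p - kthLargest x 2) / (1 - kthLargest x 2)) ∂π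
      = ∫⁻ s, ENNReal.ofReal ((p - s) / (1 - s)) ∂(ρ n) := by
    rw [← map_kth hn, lintegral_map hmg (meas_kth hn)]
  have step3 : ∫⁻ s, ENNReal.ofReal ((p - s) / (1 - s)) ∂(ρ n)
      = ENNReal.ofReal (p ^ n) := by
    rw [ρ, show dens n = fun s => ENNReal.ofReal ((n * (n-1) : ℝ) * s^(n-2) * (1-s)) from rfl,
      lintegral_withDensity_eq_lintegral_mul _
      (Measurable.ennreal_ofReal (Continuous.measurable (by continuity))) hmg]
    have hC : (0:ℝ) ≤ (n * (n-1) : ℝ) := by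
      have : (2:ℝ) ≤ n := by exact_mod_cast hn
      nlinarith
    have hae1 : ∀ᵐ s ∂(volume.restrict (Icc (0:ℝ) 1)), s ≠ (1:ℝ) := by
      refine ae_restrict_of_ae ?_
      rw [ae_iff]
      have : {s : ℝ | ¬ s ≠ 1} = {1} := by ext y; simp
      rw [this]
      exact Real.volume_singleton
    have hcong : ∫⁻ s in Icc (0:ℝ) 1,
        ((fun s => ENNReal.ofReal ((n * (n-1) : ℝ) * s^(n-2) * (1-s)))
          * fun s => ENNReal.ofReal ((p - s) / (1 - s))) s
        = ∫⁻ s in Icc (0:ℝ) 1, ENNReal.ofReal ((n * (n-1) : ℝ) * s^(n-2) * (p-s)) := by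
      refine lintegral_congr_ae ?_
      filter_upwards [ae_restrict_mem measurableSet_Icc, hae1] with s hs hs1
      simp only [Pi.mul_apply]
      have hden : (1:ℝ) - s ≠ 0 := by
        intro h; apply hs1; linarith
      have ha : (0:ℝ) ≤ (n * (n-1) : ℝ) * s^(n-2) * (1-s) := by
        have := hs.1; have := hs.2
        have h2 : (0:ℝ) ≤ s^(n-2) := pow_nonneg hs.1 _
        have h3 : (0:ℝ) ≤ 1 - s := by linarith [hs.2]
        positivity
      rw [← ENNReal.ofReal_mul ha]
      congr 1
      field_simp
    rw [hcong, ← Set.Icc_union_Ioc_eq_Icc hp0 hp1,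
      lintegral_union measurableSet_Ioc
        (by rw [Set.disjoint_left]; rintro s hs hs2; exact absurd hs.2 (not_le.2 hs2.1))]
    have hzero : ∫⁻ s in Ioc p 1, ENNReal.ofReal ((n * (n-1) : ℝ) * s^(n-2) * (p-s)) = 0 := by
      rw [setLIntegral_congr_fun measurableSet_Ioc (fun s hs => ?_),
        lintegral_zero]
      rw [ENNReal.ofReal_eq_zero]
      have h2 : (0:ℝ) ≤ s^(n-2) := pow_nonneg (le_trans hp0 hs.1.le) _
      have h3 : p - s ≤ 0 := by linarith [hs.1]
      exact mul_nonpos_of_nonneg_of_nonpos (by positivity) h3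
    rw [hzero, add_zero]
    have hnn : 0 ≤ᵐ[volume.restrict (Icc (0:ℝ) p)]
        fun s : ℝ => (n * (n-1) : ℝ) * s^(n-2) * (p-s) := by
      filter_upwards [ae_restrict_mem measurableSet_Icc] with s hs
      have h2 : (0:ℝ) ≤ s^(n-2) := pow_nonneg hs.1 _
      have h3 : (0:ℝ) ≤ p - s := by linarith [hs.2]
      positivity
    have hint : IntegrableOn (fun s : ℝ => (n * (n-1) : ℝ) * s^(n-2) * (p-s)) (Icc 0 p) :=
      Continuous.integrableOn_Icc (by continuity)
    rw [← MeasureTheory.ofReal_integral_eq_lintegral_ofReal hint hnn,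
      MeasureTheory.integral_Icc_eq_integral_Ioc, ← intervalIntegral.integral_of_le hp0,
      poly_integral2 n hn p]
  rw [step1, step2, step3, ENNReal.toReal_ofReal (by positivity)]
end

section
/- Let n ≥ 1 and ℓ ≥ 3 be integers, let c be a positive integer with c ≥ 4n/(ℓ−1), and let p ∈ [0,1]. Then n·p^{4(n−1)/(ℓ−2)} + Σ_{j=1}^{c} p^j ≥ (n + c)·p^c, where p^{4(n−1)/(ℓ−2)} denotes the real power of p with exponent 4(n−1)/(ℓ−2). -/
set_option maxHeartbeats 1000000

lemma three_point (p x y z : ℝ) (hp : 0 < p) (hxy : x < y) (hyz : y < z) :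
    (z - x) * p ^ y ≤ (z - y) * p ^ x + (y - x) * p ^ z := by
  have hzx : (0:ℝ) < z - x := by linarith
  set θ : ℝ := (z - y) / (z - x) with hθ
  have hθ0 : 0 ≤ θ := div_nonneg (by linarith) hzx.le
  have hθ1 : 0 ≤ 1 - θ := by
    rw [hθ, sub_nonneg, div_le_one hzx]; linarith
  have hy' : θ * (Real.log p * x) + (1 - θ) * (Real.log p * z) = Real.log p * y := by
    have h0 : θ * x + (1 - θ) * z = y := by
      rw [hθ]; field_simp; ring
    linear_combination Real.log p * h0
  have key : Real.exp (Real.log p * y) ≤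
      θ * Real.exp (Real.log p * x) + (1 - θ) * Real.exp (Real.log p * z) := by
    have h := convexOn_exp.2 (Set.mem_univ (Real.log p * x))
      (Set.mem_univ (Real.log p * z)) hθ0 hθ1 (by ring)
    simpa [smul_eq_mul, hy'] using h
  rw [Real.rpow_def_of_pos hp, Real.rpow_def_of_pos hp, Real.rpow_def_of_pos hp]
  calc (z - x) * Real.exp (Real.log p * y)
      ≤ (z - x) * (θ * Real.exp (Real.log p * x) + (1 - θ) * Real.exp (Real.log p * z)) :=
        mul_le_mul_of_nonneg_left key (le_of_lt hzx)
    _ = (z - y) * Real.exp (Real.log p * x) + (y - x) * Real.exp (Real.log p * z) := by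
        rw [hθ]; field_simp; ring

lemma gauss_sum (c : ℕ) : ∑ j ∈ Finset.Icc 1 c, ((c:ℝ) - (j:ℝ)) = c * (c - 1) / 2 := by
  induction c with
  | zero => simp
  | succ c ih =>
    rw [Finset.sum_Icc_succ_top (Nat.le_add_left 1 c)]
    have h2 : ∀ j ∈ Finset.Icc 1 c, (((c+1:ℕ)):ℝ) - (j:ℝ) = ((c:ℝ) - j) + 1 := by
      intros; push_cast; ring
    rw [Finset.sum_congr rfl h2, Finset.sum_add_distrib, ih, Finset.sum_const, Nat.card_Icc]
    push_cast
    simp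
    ring

/-- For integers `n ≥ 1`, `ℓ ≥ 3`, a positive integer `c ≥ 4n/(ℓ-1)`, and
`p ∈ [0,1]`: `n·p^{4(n-1)/(ℓ-2)} + Σ_{j=1}^{c} p^j ≥ (n+c)·p^c`, where
`p^{4(n-1)/(ℓ-2)}` is a real power. -/
theorem stmt6 (n ℓ c : ℕ) (hn : 1 ≤ n) (hℓ : 3 ≤ ℓ) (hc : 1 ≤ c)
    (hcb : (4 * n : ℝ) / ((ℓ : ℝ) - 1) ≤ (c : ℝ)) (p : ℝ) (hp : p ∈ Set.Icc (0 : ℝ) 1) :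
    ((n : ℝ) + (c : ℝ)) * p ^ c ≤
      (n : ℝ) * p ^ ((4 * ((n : ℝ) - 1)) / ((ℓ : ℝ) - 2)) + ∑ j ∈ Finset.Icc 1 c, p ^ j := by
  obtain ⟨hp0, hp1⟩ := hp
  set a : ℝ := (4 * ((n : ℝ) - 1)) / ((ℓ : ℝ) - 2) with ha
  have hl2 : (1:ℝ) ≤ (ℓ:ℝ) - 2 := by
    have : (3:ℝ) ≤ (ℓ:ℝ) := by exact_mod_cast hℓ
    linarith
  have hn1 : (1:ℝ) ≤ (n:ℝ) := by exact_mod_cast hn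
  have hc1 : (1:ℝ) ≤ (c:ℝ) := by exact_mod_cast hc
  have h4n : 4 * (n:ℝ) ≤ (c:ℝ) * ((ℓ:ℝ) - 1) := by
    rw [div_le_iff₀ (by linarith)] at hcb; linarith
  rcases eq_or_lt_of_le hp0 with rfl | hp0'
  · -- p = 0
    have hs : ∑ j ∈ Finset.Icc 1 c, (0:ℝ) ^ j = 0 :=
      Finset.sum_eq_zero (fun j hj => zero_pow (by
        have := (Finset.mem_Icc.mp hj).1; omega))
    rw [hs, zero_pow (by omega : c ≠ 0)]
    have h1 : (0:ℝ) ≤ (0:ℝ) ^ a := Real.rpow_nonneg le_rfl a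
    nlinarith
  · -- 0 < p
    have hPc : p ^ c = p ^ (c:ℝ) := (Real.rpow_natCast p c).symm
    have hSc : ∑ j ∈ Finset.Icc 1 c, p ^ j = ∑ j ∈ Finset.Icc 1 c, p ^ (j:ℝ) :=
      Finset.sum_congr rfl (fun j _ => (Real.rpow_natCast p j).symm)
    rw [hPc, hSc]
    by_cases hac : a ≤ (c:ℝ)
    · -- easy case
      have h1 : p ^ (c:ℝ) ≤ p ^ a := Real.rpow_le_rpow_of_exponent_ge hp0' hp1 hac
      have h2 : ∀ j ∈ Finset.Icc 1 c, p ^ (c:ℝ) ≤ p ^ (j:ℝ) := fun j hj =>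
        Real.rpow_le_rpow_of_exponent_ge hp0' hp1
          (by exact_mod_cast (Finset.mem_Icc.mp hj).2)
      have h3 : (c:ℝ) * p ^ (c:ℝ) ≤ ∑ j ∈ Finset.Icc 1 c, p ^ (j:ℝ) := by
        calc (c:ℝ) * p ^ (c:ℝ) = ∑ _j ∈ Finset.Icc 1 c, p ^ (c:ℝ) := by
              rw [Finset.sum_const, Nat.card_Icc, nsmul_eq_mul]
              norm_num
          _ ≤ _ := Finset.sum_le_sum h2
      nlinarith [mul_le_mul_of_nonneg_left h1 (by linarith : (0:ℝ) ≤ (n:ℝ))]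
    · push_neg at hac
      have hL : (0:ℝ) < (ℓ:ℝ) - 2 := by linarith
      have haL : a * ((ℓ:ℝ) - 2) = 4 * ((n:ℝ) - 1) := by
        rw [ha]; field_simp
      have hA : 2*((n:ℝ)-1) ≤ ((c:ℝ)+1)*((ℓ:ℝ)-2) := by nlinarith
      have hAc := mul_le_mul_of_nonneg_left hA (by linarith : (0:ℝ) ≤ (c:ℝ))
      have hB : 8*(n:ℝ)*((n:ℝ)-1) ≤ 2*((n:ℝ)-1)*((c:ℝ)*((ℓ:ℝ)-2)+(c:ℝ)) := by
        have := mul_nonneg (by linarith : (0:ℝ) ≤ (n:ℝ)-1)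
          (by linarith : (0:ℝ) ≤ (c:ℝ)*((ℓ:ℝ)-1) - 4*(n:ℝ))
        nlinarith
      have key2 : (2*(n:ℝ)*a) * ((ℓ:ℝ)-2) ≤ (2*(n:ℝ)*(c:ℝ) + (c:ℝ)*((c:ℝ)-1)) * ((ℓ:ℝ)-2) := by
        have hLHS : (2*(n:ℝ)*a) * ((ℓ:ℝ)-2) = 8*(n:ℝ)*((n:ℝ)-1) := by
          linear_combination 2*(n:ℝ)*haL
        rw [hLHS]; nlinarith [hB, hAc]
      have claim : (n:ℝ) * (a - (c:ℝ)) ≤ (c:ℝ) * ((c:ℝ) - 1) / 2 := by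
        have := (mul_le_mul_iff_left₀ hL).mp key2
        linarith
      have hPA : p ^ a ≤ p ^ (c:ℝ) := Real.rpow_le_rpow_of_exponent_ge hp0' hp1 hac.le
      have hterm : ∀ j ∈ Finset.Icc 1 c,
          ((c:ℝ) - (j:ℝ)) * (p ^ (c:ℝ) - p ^ a) ≤ (a - (c:ℝ)) * (p ^ (j:ℝ) - p ^ (c:ℝ)) := by
        intro j hj
        obtain ⟨hj1, hj2⟩ := Finset.mem_Icc.mp hj
        rcases eq_or_lt_of_le hj2 with rfl | hjc
        · simp
        · have hjc' : (j:ℝ) < (c:ℝ) := by exact_mod_cast hjc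
          have h3 := three_point p (j:ℝ) (c:ℝ) a hp0' hjc' hac
          linarith [h3]
      have hsum := Finset.sum_le_sum hterm
      rw [← Finset.sum_mul, gauss_sum c] at hsum
      have hre : ∑ j ∈ Finset.Icc 1 c, (a - (c:ℝ)) * (p ^ (j:ℝ) - p ^ (c:ℝ)) =
          (a - (c:ℝ)) * ((∑ j ∈ Finset.Icc 1 c, p ^ (j:ℝ)) - (c:ℝ) * p ^ (c:ℝ)) := by
        rw [← Finset.mul_sum, Finset.sum_sub_distrib, Finset.sum_const, Nat.card_Icc,
          nsmul_eq_mul]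
        norm_num
      rw [hre] at hsum
      have hPA0 : (0:ℝ) ≤ p ^ (c:ℝ) - p ^ a := by linarith
      have step := le_trans (mul_le_mul_of_nonneg_right claim hPA0) hsum
      have hac0 : (0:ℝ) < a - (c:ℝ) := by linarith
      have final : (n:ℝ) * (p ^ (c:ℝ) - p ^ a) ≤
          (∑ j ∈ Finset.Icc 1 c, p ^ (j:ℝ)) - (c:ℝ) * p ^ (c:ℝ) := by
        have e : (a - (c:ℝ)) * ((n:ℝ) * (p ^ (c:ℝ) - p ^ a)) =
            (n:ℝ) * (a - (c:ℝ)) * (p ^ (c:ℝ) - p ^ a) := by ring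
        have h5 : (a - (c:ℝ)) * ((n:ℝ) * (p ^ (c:ℝ) - p ^ a)) ≤
            (a - (c:ℝ)) * ((∑ j ∈ Finset.Icc 1 c, p ^ (j:ℝ)) - (c:ℝ) * p ^ (c:ℝ)) := by
          rw [e]; exact step
        exact (mul_le_mul_iff_right₀ hac0).mp h5
      linarith
end

section
/- Let n ≥ 1 and m ≥ 2 be integers, let p ∈ [0,1], and let c be a real number with c ≥ n(m−1)/(n+m−2) + Σ_{i=1}^{m−2} n·i/((n+i)(n+i−1)). Then p^c ≤ n·p^{m−1}/(n+m−2) + Σ_{i=1}^{m−2} n·p^{i}/((n+i)(n+i−1)). -/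
open Real Finset

lemma aux_convex {p : ℝ} (hp : 0 < p) : ConvexOn ℝ Set.univ (fun x : ℝ => p ^ x) := by
  have he : (fun x : ℝ => p ^ x) = fun x => Real.exp (Real.log p * x) := by
    funext x; rw [Real.rpow_def_of_pos hp]
  rw [he]
  refine ⟨convex_univ, fun x _ y _ a b ha hb hab => ?_⟩
  have h := convexOn_exp.2 (Set.mem_univ (Real.log p * x)) (Set.mem_univ (Real.log p * y)) ha hb hab
  simp only [smul_eq_mul] at h ⊢
  convert h using 2
  ring

lemma aux_tele (n : ℕ) (hn : 1 ≤ n) (k : ℕ) :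
    ∑ i ∈ Finset.Icc 1 k, (n : ℝ) / (((n : ℝ) + i) * ((n : ℝ) + i - 1))
      = 1 - (n : ℝ) / ((n : ℝ) + k) := by
  have hn' : (1 : ℝ) ≤ (n : ℝ) := by exact_mod_cast hn
  induction k with
  | zero => simp [div_self (by linarith : (n:ℝ) ≠ 0)]
  | succ k ih =>
    rw [Finset.sum_Icc_succ_top (by omega), ih]
    have h1 : (0:ℝ) < (n:ℝ) + k := by
      have : (0:ℝ) ≤ (k:ℕ) := Nat.cast_nonneg k
      linarith
    have h2 : (0:ℝ) < (n:ℝ) + k + 1 := by linarith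
    push_cast
    have key : (n:ℝ) / (((n:ℝ) + ((k:ℝ)+1)) * ((n:ℝ) + ((k:ℝ)+1) - 1))
        = (n:ℝ)/((n:ℝ)+k) - (n:ℝ)/((n:ℝ)+k+1) := by
      rw [div_sub_div _ _ h1.ne' h2.ne']
      congr 1 <;> ring
    rw [key]; ring



/-- For integers `n ≥ 1`, `m ≥ 2`, `p ∈ [0,1]`, and a real
`c ≥ n(m-1)/(n+m-2) + Σ_{i=1}^{m-2} n·i/((n+i)(n+i-1))`:
`p^c ≤ n·p^{m-1}/(n+m-2) + Σ_{i=1}^{m-2} n·p^i/((n+i)(n+i-1))`, where `p^c` is a real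
power. -/
theorem stmt11 (n m : ℕ) (hn : 1 ≤ n) (hm : 2 ≤ m) (p : ℝ) (hp : p ∈ Set.Icc (0 : ℝ) 1)
    (c : ℝ)
    (hc : (n : ℝ) * ((m : ℝ) - 1) / ((n : ℝ) + (m : ℝ) - 2) +
        ∑ i ∈ Finset.Icc 1 (m - 2),
          (n : ℝ) * (i : ℝ) / (((n : ℝ) + (i : ℝ)) * ((n : ℝ) + (i : ℝ) - 1)) ≤ c) :
    p ^ c ≤ (n : ℝ) * p ^ (m - 1) / ((n : ℝ) + (m : ℝ) - 2) +
      ∑ i ∈ Finset.Icc 1 (m - 2),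
        (n : ℝ) * p ^ i / (((n : ℝ) + (i : ℝ)) * ((n : ℝ) + (i : ℝ) - 1)) := by
  obtain ⟨hp0, hp1⟩ := hp
  have hn' : (1 : ℝ) ≤ (n : ℝ) := by exact_mod_cast hn
  have hm' : (2 : ℝ) ≤ (m : ℝ) := by exact_mod_cast hm
  have hD : (0:ℝ) < (n : ℝ) + (m : ℝ) - 2 := by linarith
  -- positivity of the denominators in the sum
  have hden : ∀ i ∈ Finset.Icc 1 (m-2), (0:ℝ) < ((n : ℝ) + (i : ℝ)) * ((n : ℝ) + (i : ℝ) - 1) := by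
    intro i hi
    obtain ⟨hi1, _⟩ := Finset.mem_Icc.mp hi
    have : (1:ℝ) ≤ (i:ℝ) := by exact_mod_cast hi1
    nlinarith
  -- the exponent sum E
  set E := (n : ℝ) * ((m : ℝ) - 1) / ((n : ℝ) + (m : ℝ) - 2) +
      ∑ i ∈ Finset.Icc 1 (m - 2),
        (n : ℝ) * (i : ℝ) / (((n : ℝ) + (i : ℝ)) * ((n : ℝ) + (i : ℝ) - 1)) with hE
  have hEpos : 0 < E := by
    rw [hE]
    have h1 : 0 < (n : ℝ) * ((m : ℝ) - 1) / ((n : ℝ) + (m : ℝ) - 2) := by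
      apply div_pos (by nlinarith) hD
    have h2 : 0 ≤ ∑ i ∈ Finset.Icc 1 (m - 2),
        (n : ℝ) * (i : ℝ) / (((n : ℝ) + (i : ℝ)) * ((n : ℝ) + (i : ℝ) - 1)) := by
      apply Finset.sum_nonneg
      intro i hi
      have hi1 : (1:ℝ) ≤ (i:ℝ) := by exact_mod_cast (Finset.mem_Icc.mp hi).1
      exact div_nonneg (by positivity) (hden i hi).le
    linarith
  have hcne : c ≠ 0 := (hEpos.trans_le hc).ne'
  rcases eq_or_lt_of_le hp0 with h0 | h0
  · -- p = 0
    rw [← h0, Real.zero_rpow hcne]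
    apply add_nonneg
    · apply div_nonneg (by positivity) hD.le
    · apply Finset.sum_nonneg
      intro i hi
      exact div_nonneg (by positivity) (hden i hi).le
  · -- p > 0
    have step1 : p ^ c ≤ p ^ E := Real.rpow_le_rpow_of_exponent_ge h0 hp1 hc
    refine step1.trans ?_
    -- Jensen setup
    set w : ℕ → ℝ := fun i => if i = m - 1 then (n:ℝ)/((n:ℝ)+(m:ℝ)-2)
      else (n:ℝ)/(((n:ℝ)+(i:ℝ))*((n:ℝ)+(i:ℝ)-1)) with hw
    have hm1 : m - 1 = (m - 2) + 1 := by omega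
    have hsplit : ∀ f : ℕ → ℝ, ∑ i ∈ Finset.Icc 1 (m-1), f i
        = (∑ i ∈ Finset.Icc 1 (m-2), f i) + f (m-1) := by
      intro f
      rw [hm1, Finset.sum_Icc_succ_top (by omega)]
    have hwin : ∀ i ∈ Finset.Icc 1 (m-2),
        w i = (n:ℝ)/(((n:ℝ)+(i:ℝ))*((n:ℝ)+(i:ℝ)-1)) := by
      intro i hi
      have : i ≠ m - 1 := by
        have := (Finset.mem_Icc.mp hi).2; omega
      simp [hw, this]
    -- weights are nonneg
    have hw0 : ∀ i ∈ Finset.Icc 1 (m-1), 0 ≤ w i := by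
      intro i hi
      obtain ⟨hi1, hi2⟩ := Finset.mem_Icc.mp hi
      by_cases hcase : i = m - 1
      · simp [hw, hcase]; positivity
      · rw [hwin i (Finset.mem_Icc.mpr ⟨hi1, by omega⟩)]
        have hi1' : (1:ℝ) ≤ (i:ℝ) := by exact_mod_cast hi1
        apply div_nonneg (by positivity)
        nlinarith
    -- weights sum to 1
    have hcastm2 : (((m-2 : ℕ)) : ℝ) = (m:ℝ) - 2 := by
      have : ((m:ℕ) - 2 : ℕ) = m - 2 := rfl
      push_cast [Nat.cast_sub hm]
      ring
    have hw1 : ∑ i ∈ Finset.Icc 1 (m-1), w i = 1 := by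
      rw [hsplit, Finset.sum_congr rfl hwin, aux_tele n hn (m-2), hcastm2]
      simp only [hw]
      rw [if_pos trivial]
      have e : (n:ℝ) + ((m:ℝ) - 2) = (n:ℝ) + (m:ℝ) - 2 := by ring
      rw [e]
      ring
    -- the weighted exponent sum is E
    have hwE : ∑ i ∈ Finset.Icc 1 (m-1), w i • (i:ℝ) = E := by
      rw [hsplit]
      simp only [smul_eq_mul]
      rw [Finset.sum_congr rfl (fun i hi => by rw [hwin i hi])]
      have hcastm1 : (((m-1 : ℕ)) : ℝ) = (m:ℝ) - 1 := by
        push_cast [Nat.cast_sub (by omega : 1 ≤ m)]; ring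
      simp only [hw, if_pos rfl, hcastm1, hE]
      rw [add_comm]
      congr 1
      · ring
      · apply Finset.sum_congr rfl
        intro i hi
        ring
    -- Jensen
    have hjen := (aux_convex h0).map_sum_le hw0 hw1 (fun i _ => Set.mem_univ (i:ℝ))
    rw [hwE] at hjen
    refine hjen.trans_eq ?_
    rw [hsplit]
    simp only [smul_eq_mul]
    rw [Finset.sum_congr rfl (fun i hi => by rw [hwin i hi])]
    have hcastm1 : (((m-1 : ℕ)) : ℝ) = (m:ℝ) - 1 := by
      push_cast [Nat.cast_sub (by omega : 1 ≤ m)]; ring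
    simp only [hw, if_pos rfl]
    rw [add_comm]
    congr 1
    · rw [Real.rpow_natCast]
      ring
    · apply Finset.sum_congr rfl
      intro i hi
      rw [Real.rpow_natCast]
      ring
end
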